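/- arXiv:1009.1022 — 8 statements merged into one kernel-verified Lean document; each statement's English description precedes it below -/
import Mathlib

section
/- Let (X, 𝓘) be a Polish ideal space. Assume a family 𝓐 ⊆ 𝓘 satisfies: (1) X ∖ ⋃𝓐 ∈ 𝓘; (2) the set Z = {x ∈ X : ⋃{A ∈ 𝓐 : x ∈ A} ∉ 𝓘} belongs to 𝓘; (3) for the family 𝓕 = {⋃{A ∈ 𝓐 : x ∈ A} : x ∈ X ∖ Z}, every subfamily of 𝓕 whose union contains some 𝓘-positive Borel set has cardinality at least 2^ℵ₀. Then there exists a subfamily 𝓐₀ ⊆ 𝓐 such that ⋃𝓐₀ is completely 𝓘-nonmeasurable. -/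
open Set

lemma borelCard (X : Type) [TopologicalSpace X] [SecondCountableTopology X]
    [MeasurableSpace X] [BorelSpace X] :
    Cardinal.mk {t : Set X | MeasurableSet t} ≤ Cardinal.continuum := by
  obtain ⟨b, hbc, -, hb⟩ := TopologicalSpace.exists_countable_basis X
  have hbs : ‹MeasurableSpace X› = MeasurableSpace.generateFrom b :=
    BorelSpace.measurable_eq.trans hb.borel_eq_generateFrom
  rw [show (MeasurableSet : Set X → Prop) = @MeasurableSet X (MeasurableSpace.generateFrom b) by
    rw [← hbs]]
  exact MeasurableSpace.cardinal_measurableSet_le_continuum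
    (hbc.le_aleph0.trans Cardinal.aleph0_le_continuum)

/-- key lemma, Theorem `klucz`.
Let `(X, 𝓘)` be a Polish ideal space. If `𝓐 ⊆ 𝓘` satisfies
(1) `X \ ⋃𝓐 ∈ 𝓘`,
(2) `Z = {x : ⋃{A ∈ 𝓐 : x ∈ A} ∉ 𝓘} ∈ 𝓘`,
(3) every subfamily of `𝓕 = {⋃{A ∈ 𝓐 : x ∈ A} : x ∈ X \ Z}` whose union contains an
    `𝓘`-positive Borel set has cardinality at least `2^ℵ₀`,
then some subfamily `𝓐₀ ⊆ 𝓐` has completely `𝓘`-nonmeasurable union. -/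
theorem stmt_0 {X : Type} [TopologicalSpace X] [PolishSpace X] [Uncountable X]
    [MeasurableSpace X] [BorelSpace X]
    (𝓘 : Set (Set X))
    (hDown : ∀ A B : Set X, A ⊆ B → B ∈ 𝓘 → A ∈ 𝓘)
    (hUnion : ∀ f : ℕ → Set X, (∀ n, f n ∈ 𝓘) → (⋃ n, f n) ∈ 𝓘)
    (hProper : (univ : Set X) ∉ 𝓘)
    (hSing : ∀ x : X, ({x} : Set X) ∈ 𝓘)
    (hBase : ∀ A ∈ 𝓘, ∃ B : Set X, A ⊆ B ∧ MeasurableSet B ∧ B ∈ 𝓘)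
    (𝓐 : Set (Set X)) (h𝓐 : 𝓐 ⊆ 𝓘)
    (h1 : univ \ ⋃₀ 𝓐 ∈ 𝓘)
    (h2 : {x : X | ⋃₀ {A | A ∈ 𝓐 ∧ x ∈ A} ∉ 𝓘} ∈ 𝓘)
    (h3 : ∀ 𝓖 ⊆ {S : Set X |
        ∃ x ∈ univ \ {x : X | ⋃₀ {A | A ∈ 𝓐 ∧ x ∈ A} ∉ 𝓘}, S = ⋃₀ {A | A ∈ 𝓐 ∧ x ∈ A}},
      (∃ B : Set X, MeasurableSet B ∧ B ∉ 𝓘 ∧ B ⊆ ⋃₀ 𝓖) → Cardinal.continuum ≤ Cardinal.mk ↥𝓖) :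
    ∃ 𝓐₀ ⊆ 𝓐, ∀ B : Set X, MeasurableSet B → B ∉ 𝓘 →
      (⋃₀ 𝓐₀ ∩ B).Nonempty ∧ (B \ ⋃₀ 𝓐₀).Nonempty := by
  classical
  set F : X → Set X := fun x => ⋃₀ {A | A ∈ 𝓐 ∧ x ∈ A} with hFdef
  -- basic facts about F
  have hsym : ∀ x y : X, y ∈ F x → x ∈ F y := by
    rintro x y ⟨A, ⟨hA, hx⟩, hy⟩; exact ⟨A, ⟨hA, hy⟩, hx⟩
  -- Borel hulls
  obtain ⟨Z', hZZ', hZ'm, hZ'I⟩ := hBase _ h2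
  obtain ⟨W, hWsub, hWm, hWI⟩ := hBase _ h1
  have hZZ'' : ∀ t : X, t ∉ Z' → F t ∈ 𝓘 := by
    intro t ht
    by_contra hc
    exact ht (hZZ' hc)
  -- finite unions
  have hpair : ∀ A B : Set X, A ∈ 𝓘 → B ∈ 𝓘 → A ∪ B ∈ 𝓘 := by
    intro A B hA hB
    refine hDown _ (⋃ n, if n = 0 then A else B) ?_
      (hUnion _ fun n => by split <;> assumption)
    intro x hx
    rcases hx with h | h
    · exact mem_iUnion.2 ⟨0, by simpa⟩
    · exact mem_iUnion.2 ⟨1, by simpa⟩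
  -- positivity of remainder
  have hpos : ∀ B : Set X, B ∉ 𝓘 → B \ (Z' ∪ W) ∉ 𝓘 := by
    intro B hB hmem
    exact hB (hDown _ _ (subset_diff_union B (Z' ∪ W))
      (hpair _ _ hmem (hpair _ _ hZ'I hWI)))
  -- the key picking lemma
  have pick : ∀ B : Set X, MeasurableSet B → B ∉ 𝓘 → ∀ T : Set X,
      Cardinal.mk ↥T < Cardinal.continuum →
      ∃ p, p ∈ B ∧ p ∉ Z' ∧ p ∉ W ∧ ∀ t ∈ T, F t ∈ 𝓘 → p ∉ F t := by
    intro B hBm hBI T hT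
    by_contra hcon
    push_neg at hcon
    have hcover : B \ (Z' ∪ W) ⊆ ⋃₀ (F '' {t ∈ T | F t ∈ 𝓘}) := by
      rintro p ⟨hpB, hp⟩
      obtain ⟨t, htT, htI, hpF⟩ :=
        hcon p hpB (fun h => hp (Or.inl h)) (fun h => hp (Or.inr h))
      exact ⟨F t, ⟨t, ⟨htT, htI⟩, rfl⟩, hpF⟩
    have hsub : (F '' {t ∈ T | F t ∈ 𝓘}) ⊆ {S : Set X |
        ∃ x ∈ univ \ {x : X | ⋃₀ {A | A ∈ 𝓐 ∧ x ∈ A} ∉ 𝓘}, S = ⋃₀ {A | A ∈ 𝓐 ∧ x ∈ A}} := by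
      rintro _ ⟨t, ⟨htT, htI⟩, rfl⟩
      exact ⟨t, ⟨mem_univ t, not_not_intro htI⟩, rfl⟩
    have hbig := h3 _ hsub ⟨B \ (Z' ∪ W), hBm.diff (hZ'm.union hWm), hpos B hBI, hcover⟩
    have hsmall : Cardinal.mk ↥(F '' {t ∈ T | F t ∈ 𝓘}) ≤ Cardinal.mk ↥T :=
      (Cardinal.mk_image_le).trans (Cardinal.mk_le_mk_of_subset (sep_subset _ _))
    exact absurd (hbig.trans hsmall) (not_le.2 hT)
  -- enumeration of positive Borel sets
  have hcard : Cardinal.mk {B : Set X | MeasurableSet B ∧ B ∉ 𝓘} ≤ Cardinal.continuum :=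
    (Cardinal.mk_le_mk_of_subset (fun B hB => hB.1)).trans (borelCard X)
  obtain ⟨ι⟩ : Nonempty (↥{B : Set X | MeasurableSet B ∧ B ∉ 𝓘} ↪
      Cardinal.continuum.ord.ToType) := by
    rw [← Cardinal.le_def]
    rwa [Cardinal.mk_ord_toType]
  obtain ⟨e, he⟩ : ∃ e : Cardinal.continuum.ord.ToType → Set X,
      ∀ s : ↥{B : Set X | MeasurableSet B ∧ B ∉ 𝓘}, e (ι s) = s.1 := by
    refine ⟨fun a => if h : ∃ s, ι s = a then h.choose.1 else ∅, fun s => ?_⟩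
    have h : ∃ s', ι s' = ι s := ⟨s, rfl⟩
    simp only [dif_pos h]
    exact congrArg Subtype.val (ι.injective h.choose_spec)
  -- the recursion step
  have exStep : ∀ a : Cardinal.continuum.ord.ToType,
      ∀ IH : ∀ b, b < a → X × X, ∃ p : X × X,
      (MeasurableSet (e a) ∧ e a ∉ 𝓘) →
        (p.1 ∈ e a ∧ p.1 ∉ Z' ∧ p.1 ∉ W ∧
         (∀ b (hb : b < a), F ((IH b hb).2) ∈ 𝓘 → p.1 ∉ F ((IH b hb).2)) ∧
         p.2 ∈ e a ∧ p.2 ∉ Z' ∧ p.2 ∉ W ∧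
         p.2 ∉ F p.1 ∧
         (∀ b (hb : b < a), F ((IH b hb).1) ∈ 𝓘 → p.2 ∉ F ((IH b hb).1))) := by
    intro a IH
    by_cases h : MeasurableSet (e a) ∧ e a ∉ 𝓘
    · have hIio : Cardinal.mk ↥(Iio a) < Cardinal.continuum := Cardinal.mk_Iio_ord_toType a
      have hc2 : Cardinal.mk ↥(range fun b : ↥(Iio a) => (IH b.1 b.2).2) <
          Cardinal.continuum := lt_of_le_of_lt Cardinal.mk_range_le hIio
      obtain ⟨y, hy1, hy2, hy3, hy4⟩ := pick (e a) h.1 h.2 _ hc2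
      have hc1 : Cardinal.mk ↥(insert y (range fun b : ↥(Iio a) => (IH b.1 b.2).1)) <
          Cardinal.continuum := by
        refine lt_of_le_of_lt Cardinal.mk_insert_le ?_
        exact Cardinal.add_lt_of_lt Cardinal.aleph0_le_continuum
          (lt_of_le_of_lt Cardinal.mk_range_le hIio) (by exact_mod_cast Cardinal.nat_lt_continuum 1)
      obtain ⟨x, hx1, hx2, hx3, hx4⟩ := pick (e a) h.1 h.2 _ hc1
      refine ⟨(y, x), fun _ => ⟨hy1, hy2, hy3,
        fun b hb hI => hy4 _ ⟨⟨b, hb⟩, rfl⟩ hI,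
        hx1, hx2, hx3,
        hx4 y (mem_insert _ _) (hZZ'' y hy2),
        fun b hb hI => hx4 _ (mem_insert_of_mem _ ⟨⟨b, hb⟩, rfl⟩) hI⟩⟩
    · exact ⟨(Classical.arbitrary X, Classical.arbitrary X), fun hc => absurd hc h⟩
  choose step hstep using exStep
  obtain ⟨g, hg⟩ : ∃ g : Cardinal.continuum.ord.ToType → X × X,
      ∀ a, g a = step a (fun b _ => g b) :=
    ⟨WellFounded.fix wellFounded_lt step, fun a => WellFounded.fix_eq _ _ _⟩
  have hspec : ∀ a, MeasurableSet (e a) → e a ∉ 𝓘 →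
      ((g a).1 ∈ e a ∧ (g a).1 ∉ Z' ∧ (g a).1 ∉ W ∧
       (∀ b (hb : b < a), F ((g b).2) ∈ 𝓘 → (g a).1 ∉ F ((g b).2)) ∧
       (g a).2 ∈ e a ∧ (g a).2 ∉ Z' ∧ (g a).2 ∉ W ∧
       (g a).2 ∉ F ((g a).1) ∧
       (∀ b (hb : b < a), F ((g b).1) ∈ 𝓘 → (g a).2 ∉ F ((g b).1))) := by
    intro a hm hI
    rw [hg a]
    exact hstep a (fun b _ => g b) ⟨hm, hI⟩
  -- the subfamily
  refine ⟨{A | A ∈ 𝓐 ∧ ∃ a, MeasurableSet (e a) ∧ e a ∉ 𝓘 ∧ (g a).2 ∈ A},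
    fun A hA => hA.1, ?_⟩
  intro B hBm hBI
  set s : ↥{B : Set X | MeasurableSet B ∧ B ∉ 𝓘} := ⟨B, hBm, hBI⟩ with hs
  have hea : e (ι s) = B := he s
  have hm : MeasurableSet (e (ι s)) := by rw [hea]; exact hBm
  have hI : e (ι s) ∉ 𝓘 := by rw [hea]; exact hBI
  obtain ⟨hy1, hy2, hy3, hy4, hx1, hx2, hx3, hx5, hx6⟩ := hspec (ι s) hm hI
  constructor
  · -- the x point is in B and in the union
    have hxA : (g (ι s)).2 ∈ ⋃₀ 𝓐 := by
      by_contra hc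
      exact hx3 (hWsub ⟨mem_univ _, hc⟩)
    obtain ⟨A, hA, hxA⟩ := hxA
    exact ⟨(g (ι s)).2, ⟨A, ⟨hA, ι s, hm, hI, hxA⟩, hxA⟩, hea ▸ hx1⟩
  · -- the y point is in B and outside the union
    refine ⟨(g (ι s)).1, hea ▸ hy1, ?_⟩
    rintro ⟨A, ⟨hA, b, hbm, hbI, hxbA⟩, hyA⟩
    have hyF : (g (ι s)).1 ∈ F ((g b).2) := ⟨A, ⟨hA, hxbA⟩, hyA⟩
    obtain ⟨hby1, hby2, hby3, hby4, hbx1, hbx2, hbx3, hbx5, hbx6⟩ := hspec b hbm hbI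
    rcases lt_trichotomy b (ι s) with hlt | heq | hgt
    · exact hy4 b hlt (hZZ'' _ hbx2) hyF
    · subst heq
      exact hx5 (hsym _ _ hyF)
    · exact hbx6 (ι s) hgt (hZZ'' _ hy2) (hsym _ _ hyF)
end

section
/- Let (X, 𝓘) be a Polish ideal space such that every family of at most fewer than 2^ℵ₀ sets from 𝓘 never covers any 𝓘-positive Borel set (i.e. cov_h(𝓘) = 2^ℵ₀). Assume a family 𝓐 ⊆ 𝓘 satisfies: (1) X ∖ ⋃𝓐 ∈ 𝓘; (2) the set Z = {x ∈ X : ⋃{A ∈ 𝓐 : x ∈ A} ∉ 𝓘} belongs to 𝓘. Then there exists a subfamily 𝓐₀ ⊆ 𝓐 such that ⋃𝓐₀ is completely 𝓘-nonmeasurable. -/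
open Set

theorem stmt_1 {X : Type} [TopologicalSpace X] [PolishSpace X] [Uncountable X]
    [MeasurableSpace X] [BorelSpace X]
    (𝓘 : Set (Set X))
    (hDown : ∀ A B : Set X, A ⊆ B → B ∈ 𝓘 → A ∈ 𝓘)
    (hUnion : ∀ f : ℕ → Set X, (∀ n, f n ∈ 𝓘) → (⋃ n, f n) ∈ 𝓘)
    (hProper : (univ : Set X) ∉ 𝓘)
    (hSing : ∀ x : X, ({x} : Set X) ∈ 𝓘)
    (hBase : ∀ A ∈ 𝓘, ∃ B : Set X, A ⊆ B ∧ MeasurableSet B ∧ B ∈ 𝓘)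
    (hcov : ∀ 𝓖 : Set (Set X), 𝓖 ⊆ 𝓘 → Cardinal.mk ↥𝓖 < Cardinal.continuum →
      ¬ ∃ B : Set X, MeasurableSet B ∧ B ∉ 𝓘 ∧ B ⊆ ⋃₀ 𝓖)
    (𝓐 : Set (Set X)) (h𝓐 : 𝓐 ⊆ 𝓘)
    (h1 : univ \ ⋃₀ 𝓐 ∈ 𝓘)
    (h2 : {x : X | ⋃₀ {A | A ∈ 𝓐 ∧ x ∈ A} ∉ 𝓘} ∈ 𝓘) :
    ∃ 𝓐₀ ⊆ 𝓐, ∀ B : Set X, MeasurableSet B → B ∉ 𝓘 →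
      (⋃₀ 𝓐₀ ∩ B).Nonempty ∧ (B \ ⋃₀ 𝓐₀).Nonempty := by
  classical
  obtain ⟨x0⟩ : Nonempty X := inferInstance
  have hempty : (∅ : Set X) ∈ 𝓘 := hDown ∅ {x0} (empty_subset _) (hSing x0)
  set Sf : X → Set X := fun x => ⋃₀ {A | A ∈ 𝓐 ∧ x ∈ A} with hSf
  set Zs : Set X := {x : X | Sf x ∉ 𝓘} with hZs
  set W : Set X := univ \ ⋃₀ 𝓐 with hWdef
  -- Borel-ish hulls (only membership in 𝓘 is needed)
  have hullEx : ∀ s : Set X, ∃ B : Set X, B ∈ 𝓘 ∧ (s ∈ 𝓘 → s ⊆ B) := by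
    intro s
    by_cases h : s ∈ 𝓘
    · obtain ⟨B, hsB, _, hBI⟩ := hBase s h
      exact ⟨B, hBI, fun _ => hsB⟩
    · exact ⟨∅, hempty, fun hs => absurd hs h⟩
  choose hull hullI hullSub using hullEx
  -- picking points avoiding small families
  have pick : ∀ B : Set X, MeasurableSet B → B ∉ 𝓘 → ∀ 𝓖 : Set (Set X), 𝓖 ⊆ 𝓘 →
      Cardinal.mk ↥𝓖 < Cardinal.continuum → ∃ x ∈ B, ∀ s ∈ 𝓖, x ∉ s := by
    intro B hBm hBI 𝓖 h𝓖 hc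
    by_contra h
    push_neg at h
    refine hcov 𝓖 h𝓖 hc ⟨B, hBm, hBI, fun x hx => ?_⟩
    obtain ⟨s, hs, hxs⟩ := h x hx
    exact ⟨s, hs, hxs⟩
  -- index type of cardinality continuum, with small initial segments
  let ι : Type := Cardinal.continuum.ord.ToType
  have hcardIio : ∀ α : ι, Cardinal.mk ↥(Set.Iio α) < Cardinal.continuum :=
    fun α => Cardinal.mk_Iio_ord_toType α
  -- enumerate positive Borel sets
  set P := ↥{B : Set X | MeasurableSet B ∧ B ∉ 𝓘} with hP
  have hPne : Nonempty P := ⟨⟨univ, MeasurableSet.univ, hProper⟩⟩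
  have hPcard : Cardinal.mk P ≤ Cardinal.continuum := by
    obtain ⟨b, hbc, hbgen⟩ := MeasurableSpace.CountablyGenerated.isCountablyGenerated (α := X)
    have hb : Cardinal.mk ↥b ≤ Cardinal.continuum :=
      le_trans (Cardinal.mk_le_aleph0_iff.2 hbc) Cardinal.aleph0_le_continuum
    have hms := MeasurableSpace.cardinal_measurableSet_le_continuum hb
    rw [← hbgen] at hms
    refine le_trans (Cardinal.mk_le_mk_of_subset ?_) hms
    intro t ht
    exact ht.1
  have hle : Cardinal.mk P ≤ Cardinal.mk ι := by
    rw [show Cardinal.mk ι = Cardinal.continuum from Cardinal.mk_ord_toType _]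
    exact hPcard
  obtain ⟨emb⟩ := (Cardinal.le_def P ι).1 hle
  set e : ι → P := Function.invFun emb with he'
  have he : Function.Surjective e := Function.invFun_surjective emb.injective
  -- cardinality of the families used at each stage
  have hsmall : ∀ (α : ι) (a b : Set X) (f : ↥(Set.Iio α) → Set X),
      Cardinal.mk ↥(({a, b} ∪ Set.range f : Set (Set X))) < Cardinal.continuum := by
    intro α a b f
    refine lt_of_le_of_lt (Cardinal.mk_le_mk_of_subset (subset_refl _)) ?_
    refine lt_of_le_of_lt (Cardinal.mk_union_le _ _) ?_
    apply Cardinal.add_lt_of_lt Cardinal.aleph0_le_continuum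
    · refine lt_of_le_of_lt Cardinal.mk_insert_le ?_
      rw [Cardinal.mk_singleton]
      have : ((1 : Cardinal) + 1) < Cardinal.continuum := by
        have := Cardinal.nat_lt_continuum 2
        have h22 : ((2 : ℕ) : Cardinal) = (1 : Cardinal) + 1 := by norm_num
        rwa [h22] at this
      exact this
    · exact lt_of_le_of_lt Cardinal.mk_range_le (hcardIio α)
  -- the recursion step
  have step : ∀ α : ι, ∀ g : ↥(Set.Iio α) → X × X, ∃ p : X × X,
      (p.1 ∈ (e α).1 ∧ p.1 ∉ hull Zs ∧ p.1 ∉ hull W ∧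
        ∀ β : ↥(Set.Iio α), p.1 ∉ hull (Sf (g β).2)) ∧
      (p.2 ∈ (e α).1 ∧ p.2 ∉ hull Zs ∧
        (∀ β : ↥(Set.Iio α), p.2 ∉ hull (Sf (g β).1)) ∧ p.2 ∉ hull (Sf p.1)) := by
    intro α g
    have hBm : MeasurableSet (e α).1 := (e α).2.1
    have hBI : (e α).1 ∉ 𝓘 := (e α).2.2
    -- choose x
    obtain ⟨x, hxB, hx⟩ := pick (e α).1 hBm hBI
      ({hull Zs, hull W} ∪ Set.range (fun β : ↥(Set.Iio α) => hull (Sf (g β).2)))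
      (by
        rintro s (hs | ⟨β, rfl⟩)
        · rcases hs with rfl | rfl
          exacts [hullI _, hullI _]
        · exact hullI _)
      (hsmall α _ _ _)
    -- choose y
    obtain ⟨y, hyB, hy⟩ := pick (e α).1 hBm hBI
      ({hull Zs, hull (Sf x)} ∪ Set.range (fun β : ↥(Set.Iio α) => hull (Sf (g β).1)))
      (by
        rintro s (hs | ⟨β, rfl⟩)
        · rcases hs with rfl | rfl
          exacts [hullI _, hullI _]
        · exact hullI _)
      (hsmall α _ _ _)
    refine ⟨(x, y), ⟨hxB, ?_, ?_, ?_⟩, hyB, ?_, ?_, ?_⟩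
    · exact hx _ (Or.inl (Or.inl rfl))
    · exact hx _ (Or.inl (Or.inr rfl))
    · exact fun β => hx _ (Or.inr ⟨β, rfl⟩)
    · exact hy _ (Or.inl (Or.inl rfl))
    · exact fun β => hy _ (Or.inr ⟨β, rfl⟩)
    · exact hy _ (Or.inl (Or.inr rfl))
  choose F hF using step
  let G : ι → X × X := WellFounded.fix (wellFounded_lt)
    (fun α g => F α (fun β : ↥(Set.Iio α) => g β.1 β.2))
  have hGeq : ∀ α : ι, G α = F α (fun β : ↥(Set.Iio α) => G β.1) := by
    intro α
    exact WellFounded.fix_eq _ _ _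
  have hGspec : ∀ α : ι,
      ((G α).1 ∈ (e α).1 ∧ (G α).1 ∉ hull Zs ∧ (G α).1 ∉ hull W ∧
        ∀ β : ↥(Set.Iio α), (G α).1 ∉ hull (Sf (G β.1).2)) ∧
      ((G α).2 ∈ (e α).1 ∧ (G α).2 ∉ hull Zs ∧
        (∀ β : ↥(Set.Iio α), (G α).2 ∉ hull (Sf (G β.1).1)) ∧
        (G α).2 ∉ hull (Sf (G α).1)) := by
    intro α
    have h := hF α (fun β : ↥(Set.Iio α) => G β.1)
    rw [← hGeq α] at h
    exact h
  -- auxiliary facts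
  have hnotZ : ∀ x : X, x ∉ hull Zs → Sf x ∈ 𝓘 := by
    intro x hx
    by_contra h
    exact hx (hullSub Zs h2 h)
  have hsubSf : ∀ (A : Set X) (x : X), A ∈ 𝓐 → x ∈ A → A ⊆ Sf x := by
    intro A x hA hx
    exact subset_sUnion_of_mem ⟨hA, hx⟩
  -- the subfamily
  refine ⟨{A | A ∈ 𝓐 ∧ ∃ α : ι, (G α).1 ∈ A}, fun A hA => hA.1, ?_⟩
  intro B hBm hBI
  obtain ⟨α, hα⟩ := he ⟨B, hBm, hBI⟩
  have heB : (e α).1 = B := by rw [hα]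
  constructor
  · -- meets B
    have hxB : (G α).1 ∈ B := by rw [← heB]; exact (hGspec α).1.1
    have hxW : (G α).1 ∉ hull W := (hGspec α).1.2.2.1
    have hxU : (G α).1 ∈ ⋃₀ 𝓐 := by
      by_contra h
      exact hxW (hullSub W h1 ⟨trivial, h⟩)
    obtain ⟨A, hA𝓐, hxA⟩ := hxU
    exact ⟨(G α).1, ⟨A, ⟨hA𝓐, α, hxA⟩, hxA⟩, hxB⟩
  · -- y avoids the union
    have hyB : (G α).2 ∈ B := by rw [← heB]; exact (hGspec α).2.1
    refine ⟨(G α).2, hyB, ?_⟩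
    rintro ⟨A, ⟨hA𝓐, γ, hxγA⟩, hyA⟩
    rcases lt_trichotomy γ α with h | h | h
    · have hspec := (hGspec α).2.2.2.1 ⟨γ, h⟩
      have hxγZ : Sf (G γ).1 ∈ 𝓘 := hnotZ _ (hGspec γ).1.2.1
      exact hspec (hullSub _ hxγZ (hsubSf A (G γ).1 hA𝓐 hxγA hyA))
    · subst h
      have hspec := (hGspec γ).2.2.2.2
      have hxγZ : Sf (G γ).1 ∈ 𝓘 := hnotZ _ (hGspec γ).1.2.1
      exact hspec (hullSub _ hxγZ (hsubSf A (G γ).1 hA𝓐 hxγA hyA))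
    · have hspec := (hGspec γ).1.2.2.2 ⟨α, h⟩
      have hyZ : Sf (G α).2 ∈ 𝓘 := hnotZ _ (hGspec α).2.2.1
      exact hspec (hullSub _ hyZ (hsubSf A (G α).2 hA𝓐 hyA hxγA))
end

section
/- Assume the Continuum Hypothesis (2^ℵ₀ = ℵ₁). Let (X, 𝓘) be a Polish ideal space and let 𝓐 ⊆ 𝓘 be a point-countable family (for every x ∈ X, the set {A ∈ 𝓐 : x ∈ A} is countable) with ⋃𝓐 = X. Then there exists a subfamily 𝓐₀ ⊆ 𝓐 such that ⋃𝓐₀ is completely 𝓘-nonmeasurable. -/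
open Set

section Aux

variable {X : Type}

theorem aux_sUnion (𝓘 : Set (Set X)) [Nonempty X]
    (hDown : ∀ A B : Set X, A ⊆ B → B ∈ 𝓘 → A ∈ 𝓘)
    (hUnion : ∀ f : ℕ → Set X, (∀ n, f n ∈ 𝓘) → (⋃ n, f n) ∈ 𝓘)
    (hSing : ∀ x : X, ({x} : Set X) ∈ 𝓘)
    {S : Set (Set X)} (hc : S.Countable) (hs : ∀ A ∈ S, A ∈ 𝓘) : ⋃₀ S ∈ 𝓘 := by
  rcases S.eq_empty_or_nonempty with rfl | hne
  · exact hDown _ _ (by simp) (hSing (Classical.arbitrary X))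
  · obtain ⟨f, rfl⟩ := hc.exists_eq_range hne
    rw [sUnion_range]
    exact hUnion f fun n => hs _ (mem_range_self n)

theorem aux_union2 (𝓘 : Set (Set X)) [Nonempty X]
    (hDown : ∀ A B : Set X, A ⊆ B → B ∈ 𝓘 → A ∈ 𝓘)
    (hUnion : ∀ f : ℕ → Set X, (∀ n, f n ∈ 𝓘) → (⋃ n, f n) ∈ 𝓘)
    (hSing : ∀ x : X, ({x} : Set X) ∈ 𝓘)
    {A B : Set X} (hA : A ∈ 𝓘) (hB : B ∈ 𝓘) : A ∪ B ∈ 𝓘 := by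
  rw [← sUnion_pair]
  exact aux_sUnion 𝓘 hDown hUnion hSing ((countable_singleton B).insert A)
    (by rintro C (rfl | rfl) <;> assumption)

theorem aux_ctble (𝓘 : Set (Set X)) [Nonempty X]
    (hDown : ∀ A B : Set X, A ⊆ B → B ∈ 𝓘 → A ∈ 𝓘)
    (hUnion : ∀ f : ℕ → Set X, (∀ n, f n ∈ 𝓘) → (⋃ n, f n) ∈ 𝓘)
    (hSing : ∀ x : X, ({x} : Set X) ∈ 𝓘)
    {s : Set X} (hc : s.Countable) : s ∈ 𝓘 := by
  have h := aux_sUnion 𝓘 hDown hUnion hSing (hc.image fun x => ({x} : Set X))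
    (by rintro A ⟨x, -, rfl⟩; exact hSing x)
  rwa [sUnion_image, biUnion_of_singleton] at h

/-- The "forbidden" set at stage `α` of the transfinite construction. -/
def badSet (𝓘 𝓐 : Set (Set X)) {Idx : Type} [LT Idx] (α : Idx)
    (p : (β : Idx) → β < α → X × X × Set X) : Set X :=
  ⋃₀ ({A | ∃ β, ∃ h : β < α, (p β h).2.2 = A} ∩ 𝓘) ∪
    ⋃₀ {A | A ∈ 𝓐 ∧ ∃ β, ∃ h : β < α, (p β h).2.1 ∈ A} ∪
    {y | ∃ β, ∃ h : β < α, (p β h).2.1 = y}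

theorem badSet_mem (𝓘 𝓐 : Set (Set X)) [Nonempty X]
    (hDown : ∀ A B : Set X, A ⊆ B → B ∈ 𝓘 → A ∈ 𝓘)
    (hUnion : ∀ f : ℕ → Set X, (∀ n, f n ∈ 𝓘) → (⋃ n, f n) ∈ 𝓘)
    (hSing : ∀ x : X, ({x} : Set X) ∈ 𝓘)
    (h𝓐 : 𝓐 ⊆ 𝓘) (hpc : ∀ x : X, {A | A ∈ 𝓐 ∧ x ∈ A}.Countable)
    {Idx : Type} [LT Idx] (α : Idx) (hIio : {β : Idx | β < α}.Countable)
    (p : (β : Idx) → β < α → X × X × Set X) :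
    badSet 𝓘 𝓐 α p ∈ 𝓘 := by
  haveI : Countable {β : Idx | β < α} := hIio.to_subtype
  have c1 : {A | ∃ β, ∃ h : β < α, (p β h).2.2 = A}.Countable := by
    have : {A | ∃ β, ∃ h : β < α, (p β h).2.2 = A} =
        range (fun β : {β : Idx | β < α} => (p β.1 β.2).2.2) := by
      ext A
      constructor
      · rintro ⟨β, h, rfl⟩; exact ⟨⟨β, h⟩, rfl⟩
      · rintro ⟨⟨β, h⟩, rfl⟩; exact ⟨β, h, rfl⟩
    rw [this]; exact countable_range _
  have c2 : {A | A ∈ 𝓐 ∧ ∃ β, ∃ h : β < α, (p β h).2.1 ∈ A}.Countable := by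
    have hsub : {A | A ∈ 𝓐 ∧ ∃ β, ∃ h : β < α, (p β h).2.1 ∈ A} ⊆
        ⋃ β : {β : Idx | β < α}, {A | A ∈ 𝓐 ∧ (p β.1 β.2).2.1 ∈ A} := by
      rintro A ⟨hA, β, h, hy⟩
      exact mem_iUnion.mpr ⟨⟨β, h⟩, hA, hy⟩
    exact (Set.countable_iUnion fun β => hpc _).mono hsub
  have c3 : {y | ∃ β, ∃ h : β < α, (p β h).2.1 = y}.Countable := by
    have : {y | ∃ β, ∃ h : β < α, (p β h).2.1 = y} =
        range (fun β : {β : Idx | β < α} => (p β.1 β.2).2.1) := by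
      ext y
      constructor
      · rintro ⟨β, h, rfl⟩; exact ⟨⟨β, h⟩, rfl⟩
      · rintro ⟨⟨β, h⟩, rfl⟩; exact ⟨β, h, rfl⟩
    rw [this]; exact countable_range _
  refine aux_union2 𝓘 hDown hUnion hSing (aux_union2 𝓘 hDown hUnion hSing ?_ ?_) ?_
  · exact aux_sUnion 𝓘 hDown hUnion hSing (c1.mono inter_subset_left) fun A hA => hA.2
  · exact aux_sUnion 𝓘 hDown hUnion hSing c2 fun A hA => h𝓐 hA.1
  · exact aux_ctble 𝓘 hDown hUnion hSing c3

/-- The index type: the least ordinal of cardinality `ℵ₁`. -/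
abbrev Idx : Type := (Cardinal.aleph 1).ord.ToType

theorem Idx_Iio_countable (α : Idx) : {β : Idx | β < α}.Countable := by
  rw [Cardinal.countable_iff_lt_aleph_one]
  exact Cardinal.mk_Iio_ord_toType α

theorem exists_fix {Idx : Type} [LinearOrder Idx] [WellFoundedLT Idx] {γ : Type}
    (F : (α : Idx) → ((β : Idx) → β < α → γ) → γ) :
    ∃ g : Idx → γ, ∀ α, g α = F α fun β _ => g β :=
  ⟨WellFounded.fix wellFounded_lt F, fun α => WellFounded.fix_eq _ _ _⟩

end Aux

theorem stmt_2 {X : Type} [TopologicalSpace X] [PolishSpace X] [Uncountable X]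
    [MeasurableSpace X] [BorelSpace X]
    (hCH : Cardinal.continuum = Cardinal.aleph 1)
    (𝓘 : Set (Set X))
    (hDown : ∀ A B : Set X, A ⊆ B → B ∈ 𝓘 → A ∈ 𝓘)
    (hUnion : ∀ f : ℕ → Set X, (∀ n, f n ∈ 𝓘) → (⋃ n, f n) ∈ 𝓘)
    (hProper : (univ : Set X) ∉ 𝓘)
    (hSing : ∀ x : X, ({x} : Set X) ∈ 𝓘)
    (hBase : ∀ A ∈ 𝓘, ∃ B : Set X, A ⊆ B ∧ MeasurableSet B ∧ B ∈ 𝓘)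
    (𝓐 : Set (Set X)) (h𝓐 : 𝓐 ⊆ 𝓘)
    (hpc : ∀ x : X, {A | A ∈ 𝓐 ∧ x ∈ A}.Countable)
    (hcov : ⋃₀ 𝓐 = univ) :
    ∃ 𝓐₀ ⊆ 𝓐, ∀ B : Set X, MeasurableSet B → B ∉ 𝓘 →
      (⋃₀ 𝓐₀ ∩ B).Nonempty ∧ (B \ ⋃₀ 𝓐₀).Nonempty := by
  classical
  haveI hXne : Nonempty X := by
    by_contra h
    haveI : IsEmpty X := not_nonempty_iff.mp h
    exact not_countable (α := X) inferInstance
  -- cardinality of the family of open sets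
  have hopen : Cardinal.mk {s : Set X | IsOpen s} ≤ Cardinal.continuum := by
    obtain ⟨b, hbc, -, hb⟩ := TopologicalSpace.exists_countable_basis X
    haveI : Countable b := hbc.to_subtype
    have hinj : Function.Injective
        (fun u : {s : Set X | IsOpen s} => {t : b | (t : Set X) ⊆ u.1}) := by
      intro u v huv
      simp only [Set.ext_iff, mem_setOf_eq] at huv
      have hsets : {s : Set X | s ∈ b ∧ s ⊆ u.1} = {s : Set X | s ∈ b ∧ s ⊆ v.1} := by
        ext s
        constructor
        · rintro ⟨hs, hsu⟩
          exact ⟨hs, (huv ⟨s, hs⟩).mp hsu⟩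
        · rintro ⟨hs, hsv⟩
          exact ⟨hs, (huv ⟨s, hs⟩).mpr hsv⟩
      apply Subtype.ext
      rw [hb.open_eq_sUnion' u.2, hb.open_eq_sUnion' v.2, hsets]
    calc Cardinal.mk {s : Set X | IsOpen s} ≤ Cardinal.mk (Set b) :=
          Cardinal.mk_le_of_injective hinj
      _ = 2 ^ Cardinal.mk b := Cardinal.mk_set
      _ ≤ 2 ^ Cardinal.aleph0 :=
          Cardinal.power_le_power_left two_ne_zero Cardinal.mk_le_aleph0
      _ = Cardinal.continuum := Cardinal.two_power_aleph0
  have hmeas : Cardinal.mk {t : Set X | MeasurableSet t} ≤ Cardinal.continuum := by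
    have hbor : (‹MeasurableSpace X› : MeasurableSpace X) =
        MeasurableSpace.generateFrom {s : Set X | IsOpen s} := BorelSpace.measurable_eq
    rw [show {t : Set X | MeasurableSet t} =
        {t : Set X | @MeasurableSet X (MeasurableSpace.generateFrom {s : Set X | IsOpen s}) t}
      from by rw [← hbor]]
    exact MeasurableSpace.cardinal_measurableSet_le_continuum hopen
  -- transfer CH to universe 0
  have hCH0 : Cardinal.continuum.{0} = Cardinal.aleph.{0} 1 := by
    apply Cardinal.lift_injective
    rw [Cardinal.lift_continuum, Cardinal.lift_aleph]
    simpa using hCH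
  -- the index type
  have hPcard : Cardinal.mk {B : Set X | MeasurableSet B ∧ B ∉ 𝓘} ≤ Cardinal.mk Idx := by
    rw [Cardinal.mk_ord_toType, ← hCH0]
    exact (Cardinal.mk_le_mk_of_subset fun B hB => hB.1).trans hmeas
  obtain ⟨f⟩ := (Cardinal.le_def _ _).mp hPcard
  haveI hPne : Nonempty {B : Set X | MeasurableSet B ∧ B ∉ 𝓘} :=
    ⟨⟨univ, MeasurableSet.univ, hProper⟩⟩
  set e : Idx → {B : Set X | MeasurableSet B ∧ B ∉ 𝓘} := Function.invFun f with he
  have hesurj : Function.Surjective e := Function.invFun_surjective f.injective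
  have hIio : ∀ α : Idx, {β : Idx | β < α}.Countable := Idx_Iio_countable
  -- positive sets meet the complement of every set in the ideal
  have hPos : ∀ B : Set X, B ∉ 𝓘 → ∀ S ∈ 𝓘, (B \ S).Nonempty := by
    intro B hB S hS
    rw [Set.nonempty_iff_ne_empty]
    intro hemp
    exact hB (hDown B S (by rwa [diff_eq_empty] at hemp) hS)
  have hcov' : ∀ z : X, ∃ A, A ∈ 𝓐 ∧ z ∈ A := by
    intro z
    have : z ∈ ⋃₀ 𝓐 := hcov ▸ mem_univ z
    obtain ⟨A, hA, hz⟩ := this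
    exact ⟨A, hA, hz⟩
  have hbad : ∀ (α : Idx) (p : (β : Idx) → β < α → X × X × Set X), badSet 𝓘 𝓐 α p ∈ 𝓘 :=
    fun α p => badSet_mem 𝓘 𝓐 hDown hUnion hSing h𝓐 hpc α (hIio α) p
  have hx : ∀ (α : Idx) (p : (β : Idx) → β < α → X × X × Set X),
      ((e α : Set X) \ badSet 𝓘 𝓐 α p).Nonempty :=
    fun α p => hPos _ (e α).2.2 _ (hbad α p)
  have hy : ∀ (α : Idx) (p : (β : Idx) → β < α → X × X × Set X),
      ((e α : Set X) \ (badSet 𝓘 𝓐 α p ∪ (hcov' (hx α p).choose).choose)).Nonempty :=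
    fun α p => hPos _ (e α).2.2 _
      (aux_union2 𝓘 hDown hUnion hSing (hbad α p) (h𝓐 (hcov' (hx α p).choose).choose_spec.1))
  obtain ⟨g, hg⟩ := exists_fix
    (fun (α : Idx) (p : (β : Idx) → β < α → X × X × Set X) =>
      ((hx α p).choose, (hy α p).choose, (hcov' (hx α p).choose).choose))
  have key : ∀ α : Idx,
      (g α).2.2 ∈ 𝓐 ∧ (g α).1 ∈ (g α).2.2 ∧ (g α).1 ∈ (e α : Set X) ∧
      (g α).2.1 ∈ (e α : Set X) ∧
      (g α).1 ∉ badSet 𝓘 𝓐 α (fun β _ => g β) ∧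
      (g α).2.1 ∉ badSet 𝓘 𝓐 α (fun β _ => g β) ∧ (g α).2.1 ∉ (g α).2.2 := by
    intro α
    rw [hg α]
    refine ⟨(hcov' _).choose_spec.1, (hcov' _).choose_spec.2,
      (hx α _).choose_spec.1, (hy α _).choose_spec.1, (hx α _).choose_spec.2,
      fun hc => (hy α _).choose_spec.2 (Or.inl hc),
      fun hc => (hy α _).choose_spec.2 (Or.inr hc)⟩
  refine ⟨{A | ∃ α : Idx, (g α).2.2 = A}, ?_, ?_⟩
  · rintro A ⟨α, rfl⟩
    exact (key α).1
  · intro B hBmeas hBpos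
    obtain ⟨α, hα⟩ := hesurj ⟨B, hBmeas, hBpos⟩
    have heB : (e α : Set X) = B := by rw [hα]
    constructor
    · exact ⟨(g α).1, ⟨(g α).2.2, ⟨α, rfl⟩, (key α).2.1⟩, heB ▸ (key α).2.2.1⟩
    · refine ⟨(g α).2.1, heB ▸ (key α).2.2.2.1, ?_⟩
      rintro ⟨A, ⟨β, rfl⟩, hyA⟩
      rcases lt_trichotomy β α with hβα | rfl | hαβ
      · -- earlier chosen set: contained in badSet at stage α
        refine (key α).2.2.2.2.2.1 (Or.inl (Or.inl ?_))
        exact ⟨(g β).2.2, ⟨⟨β, hβα, rfl⟩, h𝓐 (key β).1⟩, hyA⟩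
      · exact (key β).2.2.2.2.2.2 hyA
      · -- later chosen set: its base point avoids sets containing earlier y's
        refine (key β).2.2.2.2.1 (Or.inl (Or.inr ?_))
        exact ⟨(g β).2.2, ⟨(key β).1, α, hαβ, hyA⟩, (key β).2.1⟩
end

section
/- Let (X, 𝓘) be a Polish ideal space such that every 𝓘-positive Borel set contains an 𝓘-positive closed set. Let 𝓐 be a partition of X into closed sets, each belonging to 𝓘, which is strongly Borel measurable: for every closed set C ⊆ X, the saturation ⋃{A ∈ 𝓐 : A ∩ C ≠ ∅} is Borel. Then there exists a subfamily 𝓐₀ ⊆ 𝓐 such that ⋃𝓐₀ is completely 𝓘-nonmeasurable. -/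
open Set
open Cardinal in

lemma exists_inj_choice {ι α : Type} (S : ι → Set α) (h : ∀ i, #ι ≤ #(S i)) :
    ∃ f : ι → α, Function.Injective f ∧ ∀ i, f i ∈ S i := by
  classical
  obtain ⟨r, wo, hord⟩ := Cardinal.ord_eq ι
  haveI := wo
  have key : ∀ (i : ι) (g : ∀ j, r j i → α),
      (S i \ {a | ∃ j, ∃ hj : r j i, g j hj = a}).Nonempty := by
    intro i g
    have h1 : {a | ∃ j, ∃ hj : r j i, g j hj = a} =
        Set.range (fun j : {j // r j i} => g j.1 j.2) := by
      ext a; simp [Set.range]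
    have h2 : #{a | ∃ j, ∃ hj : r j i, g j hj = a} < #(S i) := by
      rw [h1]
      calc #(Set.range (fun j : {j // r j i} => g j.1 j.2)) ≤ #{j // r j i} :=
            Cardinal.mk_range_le
        _ = (Ordinal.typein r i).card := Ordinal.card_typein i
        _ < #ι := Cardinal.card_typein_lt (r := r) i hord
        _ ≤ #(S i) := h i
    by_contra hemp
    rw [Set.not_nonempty_iff_eq_empty, Set.diff_eq_empty] at hemp
    exact absurd (Cardinal.mk_le_mk_of_subset hemp) (not_le_of_gt h2)
  let f : ι → α := IsWellFounded.fix r (motive := fun _ => α) (fun i ih => (key i ih).some)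
  have hfix : ∀ i, f i = (key i (fun j _ => f j)).some := fun i =>
    IsWellFounded.fix_eq r _ i
  have hf : ∀ i, f i ∈ S i \ {a | ∃ j, ∃ hj : r j i, f j = a} := by
    intro i; rw [hfix i]; exact (key i (fun j _ => f j)).some_mem
  refine ⟨f, ?_, fun i => (hf i).1⟩
  intro i j hij
  rcases trichotomous_of r i j with hr | he | hr
  · exact absurd ⟨i, hr, hij⟩ (hf j).2
  · exact he
  · exact absurd ⟨j, hr, hij.symm⟩ (hf i).2

theorem stmt_3 {X : Type} [TopologicalSpace X] [PolishSpace X] [Uncountable X]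
    [MeasurableSpace X] [BorelSpace X]
    (𝓘 : Set (Set X))
    (hDown : ∀ A B : Set X, A ⊆ B → B ∈ 𝓘 → A ∈ 𝓘)
    (hUnion : ∀ f : ℕ → Set X, (∀ n, f n ∈ 𝓘) → (⋃ n, f n) ∈ 𝓘)
    (hProper : (univ : Set X) ∉ 𝓘)
    (hSing : ∀ x : X, ({x} : Set X) ∈ 𝓘)
    (hBase : ∀ A ∈ 𝓘, ∃ B : Set X, A ⊆ B ∧ MeasurableSet B ∧ B ∈ 𝓘)
    (hClosedBase : ∀ B : Set X, MeasurableSet B → B ∉ 𝓘 →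
      ∃ F : Set X, IsClosed F ∧ F ∉ 𝓘 ∧ F ⊆ B)
    (𝓐 : Set (Set X))
    (hcover : ⋃₀ 𝓐 = univ)
    (hdisj : ∀ A ∈ 𝓐, ∀ A' ∈ 𝓐, A ≠ A' → Disjoint A A')
    (hne : ∀ A ∈ 𝓐, A.Nonempty)
    (hclosed : ∀ A ∈ 𝓐, IsClosed A)
    (hnull : ∀ A ∈ 𝓐, A ∈ 𝓘)
    (hsbm : ∀ C : Set X, IsClosed C →
      MeasurableSet (⋃₀ {A | A ∈ 𝓐 ∧ (A ∩ C).Nonempty})) :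
    ∃ 𝓐₀ ⊆ 𝓐, ∀ B : Set X, MeasurableSet B → B ∉ 𝓘 →
      (⋃₀ 𝓐₀ ∩ B).Nonempty ∧ (B \ ⋃₀ 𝓐₀).Nonempty := by
  classical
  letI := TopologicalSpace.upgradeIsCompletelyMetrizable X
  -- saturation
  set sat : Set X → Set X := fun S => ⋃₀ {A | A ∈ 𝓐 ∧ (A ∩ S).Nonempty} with hsatdef
  have hsatmeas : ∀ C : Set X, IsClosed C → MeasurableSet (sat C) := fun C hC => hsbm C hC
  have hsatmono : ∀ S T : Set X, S ⊆ T → sat S ⊆ sat T := by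
    intro S T hST x hx
    obtain ⟨A, ⟨hA, p, hp⟩, hxA⟩ := hx
    exact ⟨A, ⟨hA, p, hp.1, hST hp.2⟩, hxA⟩
  have hsubsat : ∀ A ∈ 𝓐, ∀ S : Set X, (A ∩ S).Nonempty → A ⊆ sat S := by
    intro A hA S hAS
    exact subset_sUnion_of_mem ⟨hA, hAS⟩
  -- pieces
  have hpiece : ∀ x : X, ∃ A, A ∈ 𝓐 ∧ x ∈ A := by
    intro x
    have : x ∈ ⋃₀ 𝓐 := hcover ▸ mem_univ x
    obtain ⟨A, hA, hx⟩ := this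
    exact ⟨A, hA, hx⟩
  choose pc hpc1 hpc2 using hpiece
  have hpieceU : ∀ A ∈ 𝓐, ∀ A' ∈ 𝓐, ∀ x : X, x ∈ A → x ∈ A' → A = A' := by
    intro A hA A' hA' x hx hx'
    by_contra hne'
    exact Set.disjoint_left.mp (hdisj A hA A' hA' hne') hx hx'
  -- basic ideal facts
  have hXne : Nonempty X := inferInstance
  obtain ⟨x₀⟩ := hXne
  have hempty : (∅ : Set X) ∈ 𝓘 := hDown ∅ {x₀} (empty_subset _) (hSing x₀)
  have hpos_ne : ∀ G : Set X, G ∉ 𝓘 → G.Nonempty := by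
    intro G hG
    rcases eq_empty_or_nonempty G with rfl | h
    · exact absurd hempty hG
    · exact h
  have hUnion2 : ∀ S T : Set X, S ∈ 𝓘 → T ∈ 𝓘 → S ∪ T ∈ 𝓘 := by
    intro S T hS hT
    have := hUnion (fun n => if n = 0 then S else T) (by intro n; by_cases h : n = 0 <;> simp [h, hS, hT])
    refine hDown _ _ ?_ this
    intro x hx
    rcases hx with hx | hx
    · exact mem_iUnion.2 ⟨0, by simpa using hx⟩
    · exact mem_iUnion.2 ⟨1, by simpa using hx⟩
  -- dense sequence
  obtain ⟨u, hu⟩ := TopologicalSpace.exists_dense_seq X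
  have hu' : ∀ x : X, ∀ r : ℝ, 0 < r → ∃ n, dist x (u n) < r := by
    intro x r hr
    exact Metric.denseRange_iff.mp hu x r hr
  -- shrink lemma
  have shrink : ∀ G : Set X, IsClosed G → G ∉ 𝓘 → ∀ ε : ℝ, 0 < ε →
      ∃ H : Set X, H ⊆ G ∧ IsClosed H ∧ H ∉ 𝓘 ∧ ∀ a ∈ H, ∀ b ∈ H, dist a b ≤ ε := by
    intro G hGc hGp ε hε
    by_contra hcon
    push_neg at hcon
    have hcov : G ⊆ ⋃ n, (G ∩ Metric.closedBall (u n) (ε / 2)) := by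
      intro x hx
      obtain ⟨n, hn⟩ := hu' x (ε / 2) (by positivity)
      exact mem_iUnion.2 ⟨n, hx, Metric.mem_closedBall.2 hn.le⟩
    have hmem : ∀ n, (G ∩ Metric.closedBall (u n) (ε / 2)) ∈ 𝓘 := by
      intro n
      by_contra hpos
      obtain ⟨a, ha, b, hb, hab⟩ := hcon (G ∩ Metric.closedBall (u n) (ε / 2)) inter_subset_left
        (hGc.inter Metric.isClosed_closedBall) hpos
      have : dist a b ≤ ε := by
        calc dist a b ≤ dist a (u n) + dist (u n) b := dist_triangle _ _ _
          _ ≤ ε / 2 + ε / 2 := add_le_add (Metric.mem_closedBall.mp ha.2)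
              (by rw [dist_comm]; exact Metric.mem_closedBall.mp hb.2)
          _ = ε := by ring
      exact absurd this (not_le_of_gt hab)
    exact hGp (hDown _ _ hcov (hUnion _ hmem))
  choose sh hsh1 hsh2 hsh3 hsh4 using shrink
  have split : ∀ G : Set X, IsClosed G → G ∉ 𝓘 →
      ∃ H : Set X, H ⊆ G ∧ IsClosed H ∧ H ∉ 𝓘 ∧ (G \ sat H) ∉ 𝓘 := by
    intro G hGc hGp
    by_contra hcon
    push_neg at hcon
    let seq : ℕ → {H : Set X // IsClosed H ∧ H ∉ 𝓘} := fun n => Nat.rec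
      ⟨sh G hGc hGp 1 one_pos, hsh2 _ _ _ _ _, hsh3 _ _ _ _ _⟩
      (fun m p => ⟨sh p.1 p.2.1 p.2.2 ((1/2)^(m+1)) (by positivity),
        hsh2 _ _ _ _ _, hsh3 _ _ _ _ _⟩) n
    have hseq0 : (seq 0).1 ⊆ G := hsh1 _ _ _ _ _
    have hseqS : ∀ n, (seq (n+1)).1 ⊆ (seq n).1 := fun n => hsh1 _ _ _ _ _
    have hseqG : ∀ n, (seq n).1 ⊆ G := by
      intro n; induction n with
      | zero => exact hseq0
      | succ m ih => exact (hseqS m).trans ih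
    have hdec : ∀ N n, N ≤ n → (seq n).1 ⊆ (seq N).1 := by
      intro N n h
      induction n, h using Nat.le_induction with
      | base => exact subset_rfl
      | succ m hm ih => exact (hseqS m).trans ih
    have hsm : ∀ n, ∀ a ∈ (seq n).1, ∀ b ∈ (seq n).1, dist a b ≤ (1/2)^n := by
      intro n
      cases n with
      | zero => simp only [pow_zero]; exact hsh4 G hGc hGp 1 one_pos
      | succ m => exact hsh4 _ _ _ _ _
    have hny : ∀ n, ((seq n).1).Nonempty := fun n => hpos_ne _ (seq n).2.2
    choose y hy using hny
    have hcauchy : CauchySeq y := by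
      apply cauchySeq_of_le_tendsto_0 (fun n => (1/2:ℝ)^n) ?_ ?_
      · intro n m N hn hm
        exact hsm N (y n) (hdec N n hn (hy n)) (y m) (hdec N m hm (hy m))
      · exact tendsto_pow_atTop_nhds_zero_of_lt_one (by norm_num) (by norm_num)
    obtain ⟨z, hz⟩ := cauchySeq_tendsto_of_complete hcauchy
    have hzmem : ∀ N, z ∈ (seq N).1 := by
      intro N
      apply (seq N).2.1.mem_of_tendsto hz
      filter_upwards [Filter.eventually_ge_atTop N] with m hm
      exact hdec N m hm (hy m)
    have hcovG : G ⊆ (⋃ n, (G \ sat (seq n).1)) ∪ pc z := by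
      intro g hg
      by_cases hall : ∀ n, g ∈ sat (seq n).1
      · right
        have hmeet : ∀ n, ((pc g) ∩ (seq n).1).Nonempty := by
          intro n
          obtain ⟨A, ⟨hA, hAn⟩, hgA⟩ := hall n
          have hApc : A = pc g := hpieceU A hA (pc g) (hpc1 g) g hgA (hpc2 g)
          rwa [hApc] at hAn
        choose p hp using hmeet
        have hpz : Filter.Tendsto p Filter.atTop (nhds z) := by
          rw [tendsto_iff_dist_tendsto_zero]
          apply squeeze_zero (g := fun n => (1/2:ℝ)^n + dist (y n) z)
            (fun n => dist_nonneg) ?_ ?_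
          · intro n
            calc dist (p n) z ≤ dist (p n) (y n) + dist (y n) z := dist_triangle _ _ _
              _ ≤ (1/2)^n + dist (y n) z :=
                add_le_add_left (hsm n _ (hp n).2 _ (hy n)) _
          · simpa using (tendsto_pow_atTop_nhds_zero_of_lt_one (r := (1/2:ℝ))
              (by norm_num) (by norm_num)).add (tendsto_iff_dist_tendsto_zero.mp hz)
        have hzpg : z ∈ pc g := (hclosed _ (hpc1 g)).mem_of_tendsto hpz
          (Filter.Eventually.of_forall fun n => (hp n).1)
        have hpcz : pc g = pc z := hpieceU _ (hpc1 g) _ (hpc1 z) z hzpg (hpc2 z)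
        rw [← hpcz]; exact hpc2 g
      · left
        push_neg at hall
        obtain ⟨n, hn⟩ := hall
        exact mem_iUnion.2 ⟨n, hg, hn⟩
    have hGI : G ∈ 𝓘 := by
      refine hDown _ _ hcovG (hUnion2 _ _ ?_ (hnull _ (hpc1 z)))
      exact hUnion _ (fun n => hcon (seq n).1 (hseqG n) (seq n).2.1 (seq n).2.2)
    exact hGp hGI
  have splitPair : ∀ G : Set X, IsClosed G → G ∉ 𝓘 → ∀ ε : ℝ, 0 < ε →
      ∃ G₀ G₁ : Set X,
        (G₀ ⊆ G ∧ IsClosed G₀ ∧ G₀ ∉ 𝓘 ∧ ∀ a ∈ G₀, ∀ b ∈ G₀, dist a b ≤ ε) ∧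
        (G₁ ⊆ G ∧ IsClosed G₁ ∧ G₁ ∉ 𝓘 ∧ ∀ a ∈ G₁, ∀ b ∈ G₁, dist a b ≤ ε) ∧
        Disjoint (sat G₀) (sat G₁) := by
    intro G hGc hGp ε hε
    obtain ⟨H, hHG, hHc, hHp, hHd⟩ := split G hGc hGp
    have hmeas : MeasurableSet (G \ sat H) := (hGc.measurableSet).diff (hsatmeas H hHc)
    obtain ⟨H', hH'c, hH'p, hH'sub⟩ := hClosedBase _ hmeas hHd
    refine ⟨sh H hHc hHp ε hε, sh H' hH'c hH'p ε hε,
      ⟨(hsh1 _ _ _ _ _).trans hHG, hsh2 _ _ _ _ _, hsh3 _ _ _ _ _, hsh4 _ _ _ _ _⟩,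
      ⟨((hsh1 _ _ _ _ _).trans hH'sub).trans diff_subset, hsh2 _ _ _ _ _, hsh3 _ _ _ _ _,
        hsh4 _ _ _ _ _⟩, ?_⟩
    rw [Set.disjoint_left]
    rintro q hq0 hq1
    obtain ⟨A, ⟨hA, hA0⟩, hqA⟩ := hq0
    obtain ⟨A', ⟨hA', hA1⟩, hqA'⟩ := hq1
    have hAA : A = A' := hpieceU A hA A' hA' q hqA hqA'
    subst hAA
    obtain ⟨w, hw⟩ := hA1
    have hAH : (A ∩ H).Nonempty := by
      obtain ⟨v, hv⟩ := hA0
      exact ⟨v, hv.1, hsh1 H hHc hHp ε hε hv.2⟩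
    have hw1 : w ∈ sat H := hsubsat A hA H hAH hw.1
    have hw2 : w ∈ G \ sat H := hH'sub (hsh1 H' hH'c hH'p ε hε hw.2)
    exact hw2.2 hw1
  have key : ∀ F : Set X, IsClosed F → F ∉ 𝓘 →
      ∃ φ : (ℕ → Bool) → Set X, Function.Injective φ ∧
        ∀ x, φ x ∈ 𝓐 ∧ (φ x ∩ F).Nonempty := by
    intro F hFc hFp
    choose sp0 sp1 hsp using splitPair
    set root := sh F hFc hFp 1 one_pos with hrootdef
    let spl : Set X → ℕ → Bool → Set X := fun G n b =>
      if h : IsClosed G ∧ G ∉ 𝓘 then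
        (if b then sp0 G h.1 h.2 ((1/2)^(n+1)) (by positivity)
         else sp1 G h.1 h.2 ((1/2)^(n+1)) (by positivity))
      else G
    let tree : List Bool → Set X := fun s => List.rec root (fun b t ih => spl ih t.length b) s
    have htree_cons : ∀ (b : Bool) (t : List Bool), tree (b :: t) = spl (tree t) t.length b :=
      fun b t => rfl
    have hinv : ∀ s : List Bool, IsClosed (tree s) ∧ tree s ∉ 𝓘 ∧ tree s ⊆ F := by
      intro s; induction s with
      | nil => exact ⟨hsh2 _ _ _ _ _, hsh3 _ _ _ _ _, hsh1 _ _ _ _ _⟩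
      | cons b t ih =>
        rw [htree_cons]
        have h : IsClosed (tree t) ∧ tree t ∉ 𝓘 := ⟨ih.1, ih.2.1⟩
        simp only [spl, dif_pos h]
        obtain ⟨h0, h1, hd⟩ := hsp (tree t) h.1 h.2 ((1/2)^(t.length+1)) (by positivity)
        cases b
        · exact ⟨h1.2.1, h1.2.2.1, h1.1.trans ih.2.2⟩
        · exact ⟨h0.2.1, h0.2.2.1, h0.1.trans ih.2.2⟩
    have hsub : ∀ (b : Bool) (t : List Bool), tree (b :: t) ⊆ tree t := by
      intro b t
      rw [htree_cons]
      have h : IsClosed (tree t) ∧ tree t ∉ 𝓘 := ⟨(hinv t).1, (hinv t).2.1⟩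
      simp only [spl, dif_pos h]
      obtain ⟨h0, h1, hd⟩ := hsp (tree t) h.1 h.2 ((1/2)^(t.length+1)) (by positivity)
      cases b
      · exact h1.1
      · exact h0.1
    have hsmalls : ∀ s : List Bool, ∀ a ∈ tree s, ∀ c ∈ tree s,
        dist a c ≤ (1/2)^s.length := by
      intro s
      cases s with
      | nil => simpa using hsh4 F hFc hFp 1 one_pos
      | cons b t =>
        rw [htree_cons]
        have h : IsClosed (tree t) ∧ tree t ∉ 𝓘 := ⟨(hinv t).1, (hinv t).2.1⟩
        simp only [spl, dif_pos h]
        obtain ⟨h0, h1, hd⟩ := hsp (tree t) h.1 h.2 ((1/2)^(t.length+1)) (by positivity)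
        cases b
        · simpa using h1.2.2.2
        · simpa using h0.2.2.2
    have hdisjt : ∀ t : List Bool,
        Disjoint (sat (tree (true :: t))) (sat (tree (false :: t))) := by
      intro t
      rw [htree_cons, htree_cons]
      have h : IsClosed (tree t) ∧ tree t ∉ 𝓘 := ⟨(hinv t).1, (hinv t).2.1⟩
      simp only [spl, dif_pos h, if_true, if_false]
      exact (hsp (tree t) h.1 h.2 ((1/2)^(t.length+1)) (by positivity)).2.2
    let pre : (ℕ → Bool) → ℕ → List Bool := fun x n => Nat.rec [] (fun m ih => x m :: ih) n
    have hpreS : ∀ (x : ℕ → Bool) (n : ℕ), pre x (n+1) = x n :: pre x n := fun x n => rfl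
    have hprelen : ∀ (x : ℕ → Bool) (n : ℕ), (pre x n).length = n := by
      intro x n; induction n with
      | zero => rfl
      | succ m ih => rw [hpreS]; simp [ih]
    have hbdec : ∀ (x : ℕ → Bool) (N n : ℕ), N ≤ n → tree (pre x n) ⊆ tree (pre x N) := by
      intro x N n h
      induction n, h using Nat.le_induction with
      | base => exact subset_rfl
      | succ m hm ih => rw [hpreS]; exact (hsub _ _).trans ih
    have hzex : ∀ x : ℕ → Bool, ∃ z, ∀ n, z ∈ tree (pre x n) := by
      intro x
      choose y hy using fun n => hpos_ne _ (hinv (pre x n)).2.1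
      have hcauchy : CauchySeq y := by
        apply cauchySeq_of_le_tendsto_0 (fun n => (1/2:ℝ)^n) ?_ ?_
        · intro n m N hn hm
          have := hsmalls (pre x N) (y n) (hbdec x N n hn (hy n)) (y m) (hbdec x N m hm (hy m))
          rwa [hprelen] at this
        · exact tendsto_pow_atTop_nhds_zero_of_lt_one (by norm_num) (by norm_num)
      obtain ⟨z, hz⟩ := cauchySeq_tendsto_of_complete hcauchy
      refine ⟨z, fun N => ?_⟩
      apply (hinv (pre x N)).1.mem_of_tendsto hz
      filter_upwards [Filter.eventually_ge_atTop N] with m hm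
      exact hbdec x N m hm (hy m)
    choose zf hzf using hzex
    refine ⟨fun x => pc (zf x), ?_, fun x => ⟨hpc1 _, ⟨zf x, hpc2 _, (hinv (pre x 0)).2.2 (hzf x 0)⟩⟩⟩
    intro x y hxy
    by_contra hne'
    have hex : ∃ n, x n ≠ y n := by
      by_contra h; push_neg at h; exact hne' (funext h)
    set n := Nat.find hex with hndef
    have hn : x n ≠ y n := Nat.find_spec hex
    have hmin : ∀ m, m < n → x m = y m := fun m hm => not_not.mp (Nat.find_min hex hm)
    have hpxy : ∀ k, k ≤ n → pre x k = pre y k := by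
      intro k hk
      induction k with
      | zero => rfl
      | succ m ih =>
        rw [hpreS, hpreS, ih (Nat.le_of_succ_le hk), hmin m (Nat.lt_of_succ_le hk)]
    have hx1 : zf x ∈ tree (x n :: pre x n) := by rw [← hpreS]; exact hzf x (n+1)
    have hy1 : zf y ∈ tree (y n :: pre x n) := by
      rw [hpxy n le_rfl, ← hpreS]; exact hzf y (n+1)
    have hsat1 : pc (zf x) ⊆ sat (tree (x n :: pre x n)) :=
      hsubsat _ (hpc1 _) _ ⟨zf x, hpc2 _, hx1⟩
    have hsat2 : pc (zf y) ⊆ sat (tree (y n :: pre x n)) :=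
      hsubsat _ (hpc1 _) _ ⟨zf y, hpc2 _, hy1⟩
    have hdisj2 : Disjoint (sat (tree (x n :: pre x n))) (sat (tree (y n :: pre x n))) := by
      cases hxn : x n <;> cases hyn : y n
      · exact absurd (hxn.trans hyn.symm) hn
      · exact (hdisjt (pre x n)).symm
      · exact hdisjt (pre x n)
      · exact absurd (hxn.trans hyn.symm) hn
    have hxy' : pc (zf x) = pc (zf y) := hxy
    have hm1 : zf y ∈ sat (tree (x n :: pre x n)) := hsat1 (by rw [hxy']; exact hpc2 _)
    have hm2 : zf y ∈ sat (tree (y n :: pre x n)) := hsat2 (hpc2 (zf y))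
    exact Set.disjoint_left.mp hdisj2 hm1 hm2
  -- injection from closed positive sets into `ℕ → Bool`
  let e : Prop ≃ Bool := Equiv.propEquivBool
  let g : {F : Set X // IsClosed F ∧ F ∉ 𝓘} → (ℕ → Bool) := fun F m =>
    e ((Metric.ball (u (Nat.unpair m).1) (1/(((Nat.unpair m).2 : ℝ)+1)) ∩ F.1).Nonempty)
  have main : ∀ S T : Set X, IsClosed T →
      (∀ a b : ℕ, (Metric.ball (u a) (1/((b : ℝ)+1)) ∩ S).Nonempty →
        (Metric.ball (u a) (1/((b : ℝ)+1)) ∩ T).Nonempty) → S ⊆ T := by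
    intro S T hT hsub x hx
    rw [← hT.closure_eq]
    rw [Metric.mem_closure_iff]
    intro ε hε
    obtain ⟨b, hb⟩ := exists_nat_one_div_lt (show (0:ℝ) < ε/2 by positivity)
    obtain ⟨a, ha⟩ := hu' x (1/((b : ℝ)+1)) (by positivity)
    obtain ⟨p, hp⟩ := hsub a b ⟨x, Metric.mem_ball.mpr ha, hx⟩
    refine ⟨p, hp.2, ?_⟩
    calc dist x p ≤ dist x (u a) + dist (u a) p := dist_triangle _ _ _
      _ < 1/((b : ℝ)+1) + 1/((b : ℝ)+1) :=
          add_lt_add ha (by rw [dist_comm]; exact Metric.mem_ball.mp hp.1)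
      _ < ε/2 + ε/2 := add_lt_add hb hb
      _ = ε := by ring
  have hginj : Function.Injective g := by
    intro F F' hFF
    have hiff : ∀ a b : ℕ, ((Metric.ball (u a) (1/((b : ℝ)+1)) ∩ F.1).Nonempty ↔
        (Metric.ball (u a) (1/((b : ℝ)+1)) ∩ F'.1).Nonempty) := by
      intro a b
      have h1 := congrFun hFF (Nat.pair a b)
      simp only [g, Nat.unpair_pair] at h1
      exact iff_of_eq (e.injective h1)
    refine Subtype.ext (subset_antisymm ?_ ?_)
    · exact main F.1 F'.1 F'.2.1 (fun a b h => (hiff a b).mp h)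
    · exact main F'.1 F.1 F.2.1 (fun a b h => (hiff a b).mpr h)
  -- prepend a bit, injectively
  let cns : ((ℕ → Bool) × Bool) → (ℕ → Bool) := fun p n => Nat.rec p.2 (fun m _ => p.1 m) n
  have hcns : Function.Injective cns := by
    intro p q h
    have h0 : p.2 = q.2 := congrFun h 0
    have h1 : p.1 = q.1 := funext fun m => congrFun h (m+1)
    exact Prod.ext h1 h0
  -- the injective choice
  let S : {F : Set X // IsClosed F ∧ F ∉ 𝓘} × Bool → Set (Set X) :=
    fun i => {A | A ∈ 𝓐 ∧ (A ∩ i.1.1).Nonempty}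
  have hS : ∀ i, Cardinal.mk ({F : Set X // IsClosed F ∧ F ∉ 𝓘} × Bool) ≤ Cardinal.mk (S i) := by
    intro i
    obtain ⟨φ, hφinj, hφmem⟩ := key i.1.1 i.1.2.1 i.1.2.2
    have h1 : Cardinal.mk ({F : Set X // IsClosed F ∧ F ∉ 𝓘} × Bool) ≤ Cardinal.mk (ℕ → Bool) := by
      apply Cardinal.mk_le_of_injective (f := fun j => cns (g j.1, j.2))
      intro j j' hh
      have h2 := hcns hh
      rw [Prod.mk.injEq] at h2
      exact Prod.ext (hginj h2.1) h2.2
    have h2 : Cardinal.mk (ℕ → Bool) ≤ Cardinal.mk (S i) := by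
      apply Cardinal.mk_le_of_injective (f := fun x => (⟨φ x, hφmem x⟩ : S i))
      intro x y hh
      exact hφinj (congrArg Subtype.val hh)
    exact h1.trans h2
  obtain ⟨f, hfinj, hfmem⟩ := exists_inj_choice S hS
  refine ⟨Set.range (fun F : {F : Set X // IsClosed F ∧ F ∉ 𝓘} => f (F, true)), ?_, ?_⟩
  · rintro A ⟨F, rfl⟩
    exact (hfmem (F, true)).1
  · intro B hBmeas hBpos
    obtain ⟨F₀, hF₀c, hF₀p, hF₀B⟩ := hClosedBase B hBmeas hBpos
    set i : {F : Set X // IsClosed F ∧ F ∉ 𝓘} := ⟨F₀, hF₀c, hF₀p⟩ with hidef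
    constructor
    · obtain ⟨p, hp⟩ := (hfmem (i, true)).2
      exact ⟨p, ⟨f (i, true), ⟨i, rfl⟩, hp.1⟩, hF₀B hp.2⟩
    · obtain ⟨q, hq⟩ := (hfmem (i, false)).2
      refine ⟨q, hF₀B hq.2, ?_⟩
      rintro ⟨A₀, ⟨G, rfl⟩, hqA⟩
      have he1 : f (G, true) = f (i, false) :=
        hpieceU _ (hfmem (G, true)).1 _ (hfmem (i, false)).1 q hqA hq.1
      have he2 := hfinj he1
      simpa using he2
end

section
/- Let (X, 𝓘) be a Polish ideal space such that every 𝓘-positive Borel set contains an 𝓘-positive closed set, and let 𝓐 be a partition of X into closed sets, each belonging to 𝓘, which is strongly Borel measurable: for every closed set C ⊆ X, the saturation ⋃{A ∈ 𝓐 : A ∩ C ≠ ∅} is Borel. Then for every 𝓘-positive Borel set B, the family {A ∈ 𝓐 : A ∩ B ≠ ∅} has cardinality 2^ℵ₀. -/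
open Set

/-- The saturation of a set `C` with respect to a family `𝓐`. -/
def satOf {X : Type} (𝓐 : Set (Set X)) (C : Set X) : Set X :=
  ⋃₀ {A | A ∈ 𝓐 ∧ (A ∩ C).Nonempty}

theorem stmt_4 {X : Type} [TopologicalSpace X] [PolishSpace X] [Uncountable X]
    [MeasurableSpace X] [BorelSpace X]
    (𝓘 : Set (Set X))
    (hDown : ∀ A B : Set X, A ⊆ B → B ∈ 𝓘 → A ∈ 𝓘)
    (hUnion : ∀ f : ℕ → Set X, (∀ n, f n ∈ 𝓘) → (⋃ n, f n) ∈ 𝓘)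
    (hProper : (univ : Set X) ∉ 𝓘)
    (hSing : ∀ x : X, ({x} : Set X) ∈ 𝓘)
    (hBase : ∀ A ∈ 𝓘, ∃ B : Set X, A ⊆ B ∧ MeasurableSet B ∧ B ∈ 𝓘)
    (hClosedBase : ∀ B : Set X, MeasurableSet B → B ∉ 𝓘 →
      ∃ F : Set X, IsClosed F ∧ F ∉ 𝓘 ∧ F ⊆ B)
    (𝓐 : Set (Set X))
    (hcover : ⋃₀ 𝓐 = univ)
    (hdisj : ∀ A ∈ 𝓐, ∀ A' ∈ 𝓐, A ≠ A' → Disjoint A A')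
    (hne : ∀ A ∈ 𝓐, A.Nonempty)
    (hclosed : ∀ A ∈ 𝓐, IsClosed A)
    (hnull : ∀ A ∈ 𝓐, A ∈ 𝓘)
    (hsbm : ∀ C : Set X, IsClosed C →
      MeasurableSet (⋃₀ {A | A ∈ 𝓐 ∧ (A ∩ C).Nonempty})) :
    ∀ B : Set X, MeasurableSet B → B ∉ 𝓘 →
      Cardinal.mk ↥{A | A ∈ 𝓐 ∧ (A ∩ B).Nonempty} = Cardinal.continuum := by
  classical
  intro B hBmeas hBpos
  letI := TopologicalSpace.upgradeIsCompletelyMetrizable X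
  have hXne : Nonempty X := inferInstance
  -- basic ideal facts
  have hempty : (∅ : Set X) ∈ 𝓘 :=
    hDown ∅ {Classical.arbitrary X} (empty_subset _) (hSing _)
  have hpair : ∀ S T : Set X, S ∈ 𝓘 → T ∈ 𝓘 → S ∪ T ∈ 𝓘 := by
    intro S T hS hT
    have h := hUnion (fun n => if n = 0 then S else T) (by
      intro n; by_cases h : n = 0 <;> simp [h, hS, hT])
    refine hDown _ _ ?_ h
    intro x hx
    rcases hx with hx | hx
    · exact mem_iUnion.2 ⟨0, by simpa using hx⟩
    · exact mem_iUnion.2 ⟨1, by simpa using hx⟩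
  have hposne : ∀ S : Set X, S ∉ 𝓘 → S.Nonempty := by
    intro S hS
    rcases S.eq_empty_or_nonempty with rfl | h
    · exact absurd hempty hS
    · exact h
  -- the piece of the partition containing a given point
  have hpieceEx : ∀ x : X, ∃ A, A ∈ 𝓐 ∧ x ∈ A := by
    intro x
    have hx : x ∈ ⋃₀ 𝓐 := by rw [hcover]; trivial
    rcases hx with ⟨A, hA, hxA⟩
    exact ⟨A, hA, hxA⟩
  choose piece hpieceA hpiecemem using hpieceEx
  have hpieceU : ∀ (A : Set X) (x : X), A ∈ 𝓐 → x ∈ A → A = piece x := by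
    intro A x hA hx
    by_contra hne'
    exact Set.disjoint_left.1 (hdisj A hA (piece x) (hpieceA x) hne') hx (hpiecemem x)
  have hsatmem : ∀ (C : Set X) (y : X), y ∈ satOf 𝓐 C → (piece y ∩ C).Nonempty := by
    intro C y hy
    rcases hy with ⟨A, ⟨hA, hAC⟩, hyA⟩
    rwa [hpieceU A y hA hyA] at hAC
  -- shrinking to small positive closed subsets
  have shrink : ∀ F : Set X, IsClosed F → F ∉ 𝓘 → ∀ ε : ℝ, 0 < ε →
      ∃ F' : Set X, F' ⊆ F ∧ IsClosed F' ∧ F' ∉ 𝓘 ∧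
        ∀ x ∈ F', ∀ y ∈ F', dist x y ≤ ε := by
    intro F hFcl hFpos ε hε
    set u := TopologicalSpace.denseSeq X with hu
    have hcov : F ⊆ ⋃ n, F ∩ Metric.closedBall (u n) (ε/3) := by
      intro x hx
      obtain ⟨n, hn⟩ := (TopologicalSpace.denseRange_denseSeq X).exists_dist_lt x
        (by positivity : (0:ℝ) < ε/3)
      exact mem_iUnion.2 ⟨n, hx, Metric.mem_closedBall.2 hn.le⟩
    have hex : ∃ n, F ∩ Metric.closedBall (u n) (ε/3) ∉ 𝓘 := by
      by_contra hall
      push_neg at hall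
      exact hFpos (hDown _ _ hcov (hUnion _ hall))
    obtain ⟨n, hn⟩ := hex
    refine ⟨F ∩ Metric.closedBall (u n) (ε/3), inter_subset_left,
      hFcl.inter Metric.isClosed_closedBall, hn, ?_⟩
    intro x hx y hy
    calc dist x y ≤ dist x (u n) + dist (u n) y := dist_triangle _ _ _
    _ ≤ ε/3 + ε/3 := add_le_add hx.2 (by rw [dist_comm]; exact hy.2)
    _ ≤ ε := by linarith
  have shrink' : ∀ (p : {F : Set X // IsClosed F ∧ F ∉ 𝓘}) (n : ℕ),
      ∃ q : {F : Set X // IsClosed F ∧ F ∉ 𝓘}, q.1 ⊆ p.1 ∧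
        ∀ x ∈ q.1, ∀ y ∈ q.1, dist x y ≤ (1/2:ℝ)^n := by
    intro p n
    obtain ⟨F', h1, h2, h3, h4⟩ := shrink p.1 p.2.1 p.2.2 ((1/2)^n) (by positivity)
    exact ⟨⟨F', h2, h3⟩, h1, h4⟩
  choose shr hshr1 hshr2 using shrink'
  -- a decreasing chain of small positive closed sets inside any positive closed set
  have chainpt : ∀ p : {F : Set X // IsClosed F ∧ F ∉ 𝓘},
      ∃ G : ℕ → {F : Set X // IsClosed F ∧ F ∉ 𝓘},
        (∀ n, (G n).1 ⊆ p.1) ∧ (∀ n, (G (n+1)).1 ⊆ (G n).1) ∧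
        (∀ n, ∀ x ∈ (G n).1, ∀ y ∈ (G n).1, dist x y ≤ (1/2:ℝ)^n) := by
    intro p
    refine ⟨fun n => Nat.rec (shr p 0) (fun n g => shr g (n+1)) n, ?_, ?_, ?_⟩
    · intro n
      induction n with
      | zero => exact hshr1 p 0
      | succ n ih => exact (hshr1 _ _).trans ih
    · intro n
      exact hshr1 _ _
    · intro n
      cases n with
      | zero => exact hshr2 p 0
      | succ n => exact hshr2 _ _
  -- Cantor intersection: a point in a decreasing chain of small closed sets
  have point : ∀ G : ℕ → {F : Set X // IsClosed F ∧ F ∉ 𝓘},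
      (∀ n, (G (n+1)).1 ⊆ (G n).1) →
      (∀ n, ∀ x ∈ (G n).1, ∀ y ∈ (G n).1, dist x y ≤ (1/2:ℝ)^n) →
      ∃ x, ∀ n, x ∈ (G n).1 := by
    intro G hmono hsm
    have hanti : ∀ m n, n ≤ m → (G m).1 ⊆ (G n).1 := by
      intro m n h
      induction h with
      | refl => exact subset_rfl
      | step h ih => exact (hmono _).trans ih
    have hxsmem : ∀ n, (hposne _ (G n).2.2).some ∈ (G n).1 :=
      fun n => (hposne _ (G n).2.2).some_mem
    set xs : ℕ → X := fun n => (hposne _ (G n).2.2).some with hxs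
    have hcauchy : CauchySeq xs := by
      apply cauchySeq_of_le_geometric (1/2) 1 (by norm_num)
      intro n
      rw [one_mul]
      exact hsm n _ (hxsmem n) _ (hmono n (hxsmem (n+1)))
    obtain ⟨x, hx⟩ := cauchySeq_tendsto_of_complete hcauchy
    refine ⟨x, fun n => ?_⟩
    apply (G n).2.1.mem_of_tendsto hx
    filter_upwards [Filter.eventually_ge_atTop n] with m hm
    exact hanti m n hm (hxsmem m)
  -- splitting a positive closed set into two with disjoint saturations
  have split : ∀ p : {F : Set X // IsClosed F ∧ F ∉ 𝓘},
      ∃ q r : {F : Set X // IsClosed F ∧ F ∉ 𝓘},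
        q.1 ⊆ p.1 ∧ r.1 ⊆ p.1 ∧ r.1 ∩ satOf 𝓐 q.1 = ∅ := by
    intro p
    obtain ⟨G, hG1, hG2, hG3⟩ := chainpt p
    obtain ⟨x, hx⟩ := point G hG2 hG3
    have key : ∃ n, p.1 \ satOf 𝓐 (G n).1 ∉ 𝓘 := by
      by_contra hall
      push_neg at hall
      have hU : (⋃ n, p.1 \ satOf 𝓐 (G n).1) ∈ 𝓘 := hUnion _ hall
      have hsubU : p.1 ⊆ (⋃ n, p.1 \ satOf 𝓐 (G n).1) ∪ piece x := by
        intro y hy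
        by_cases hyU : y ∈ ⋃ n, p.1 \ satOf 𝓐 (G n).1
        · exact Or.inl hyU
        · refine Or.inr ?_
          have hysat : ∀ n, (piece y ∩ (G n).1).Nonempty := by
            intro n
            by_contra hne2
            exact hyU (mem_iUnion.2 ⟨n, hy, fun hsat => hne2 (hsatmem _ y hsat)⟩)
          choose z hz1 hz2 using hysat
          have hzx : Filter.Tendsto z Filter.atTop (nhds x) := by
            rw [tendsto_iff_dist_tendsto_zero]
            apply squeeze_zero (fun n => dist_nonneg)
              (fun n => hG3 n _ (hz2 n) _ (hx n))
            exact tendsto_pow_atTop_nhds_zero_of_lt_one (by norm_num) (by norm_num)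
          have hxpy : x ∈ piece y :=
            (hclosed _ (hpieceA y)).mem_of_tendsto hzx (Filter.Eventually.of_forall hz1)
          have hpe : piece y = piece x := hpieceU (piece y) x (hpieceA y) hxpy
          rw [← hpe]
          exact hpiecemem y
      exact p.2.2 (hDown _ _ hsubU (hpair _ _ hU (hnull _ (hpieceA x))))
    obtain ⟨n, hn⟩ := key
    have hmeas : MeasurableSet (p.1 \ satOf 𝓐 (G n).1) :=
      (p.2.1.measurableSet).diff (hsbm (G n).1 (G n).2.1)
    obtain ⟨F₁, hF₁cl, hF₁pos, hF₁sub⟩ := hClosedBase _ hmeas hn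
    refine ⟨G n, ⟨F₁, hF₁cl, hF₁pos⟩, hG1 n, fun y hy => (hF₁sub hy).1, ?_⟩
    apply eq_empty_iff_forall_notMem.2
    intro y hy
    exact (hF₁sub hy.1).2 hy.2
  -- a node-splitting function producing small children with disjoint saturations
  have node : ∀ (p : {F : Set X // IsClosed F ∧ F ∉ 𝓘}) (n : ℕ),
      ∃ q r : {F : Set X // IsClosed F ∧ F ∉ 𝓘}, q.1 ⊆ p.1 ∧ r.1 ⊆ p.1 ∧
      (∀ x ∈ q.1, ∀ y ∈ q.1, dist x y ≤ (1/2:ℝ)^n) ∧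
      (∀ x ∈ r.1, ∀ y ∈ r.1, dist x y ≤ (1/2:ℝ)^n) ∧
      r.1 ∩ satOf 𝓐 q.1 = ∅ := by
    intro p n
    obtain ⟨q0, r0, hq0, hr0, hdis⟩ := split p
    refine ⟨shr q0 n, shr r0 n, (hshr1 q0 n).trans hq0, (hshr1 r0 n).trans hr0,
      hshr2 q0 n, hshr2 r0 n, ?_⟩
    apply eq_empty_iff_forall_notMem.2
    intro y hy
    rcases hy.2 with ⟨A, ⟨hA, hAne⟩, hyA⟩
    have hmem : y ∈ r0.1 ∩ satOf 𝓐 q0.1 :=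
      ⟨hshr1 r0 n hy.1,
        ⟨A, ⟨hA, hAne.mono (inter_subset_inter_right _ (hshr1 q0 n))⟩, hyA⟩⟩
    rw [hdis] at hmem
    exact hmem
  choose nq nr hnq hnr hnqs hnrs hnd using node
  -- base of the Cantor scheme: a closed positive subset of B
  obtain ⟨F0, hF0cl, hF0pos, hF0sub⟩ := hClosedBase B hBmeas hBpos
  set base : {F : Set X // IsClosed F ∧ F ∉ 𝓘} := ⟨F0, hF0cl, hF0pos⟩ with hbase
  -- the Cantor scheme
  set H : (ℕ → Bool) → ℕ → {F : Set X // IsClosed F ∧ F ∉ 𝓘} :=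
    fun α n => Nat.rec (nq base 0) (fun n p => cond (α n) (nr p (n+1)) (nq p (n+1))) n
    with hH
  have hHsucc : ∀ (α : ℕ → Bool) (n : ℕ),
      H α (n+1) = cond (α n) (nr (H α n) (n+1)) (nq (H α n) (n+1)) := fun _ _ => rfl
  have hHmono : ∀ (α : ℕ → Bool) (n : ℕ), (H α (n+1)).1 ⊆ (H α n).1 := by
    intro α n
    rw [hHsucc]
    cases hα : α n
    · simp only [Bool.cond_false]; exact hnq _ _
    · simp only [Bool.cond_true]; exact hnr _ _
  have hHsm : ∀ (α : ℕ → Bool) (n : ℕ),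
      ∀ x ∈ (H α n).1, ∀ y ∈ (H α n).1, dist x y ≤ (1/2:ℝ)^n := by
    intro α n
    cases n with
    | zero => exact hnqs base 0
    | succ n =>
      rw [hHsucc]
      cases hα : α n
      · simp only [Bool.cond_false]; exact hnqs _ _
      · simp only [Bool.cond_true]; exact hnrs _ _
  have hHagree : ∀ (α β : ℕ → Bool) (n : ℕ), (∀ i < n, α i = β i) → H α n = H β n := by
    intro α β n
    induction n with
    | zero => intro _; rfl
    | succ n ih =>
      intro h
      have h1 : H α n = H β n := ih (fun i hi => h i (hi.trans (Nat.lt_succ_self n)))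
      rw [hHsucc, hHsucc, h1, h n (Nat.lt_succ_self n)]
  have hHsubB : ∀ (α : ℕ → Bool) (n : ℕ), (H α n).1 ⊆ B := by
    intro α n
    induction n with
    | zero => exact (hnq base 0).trans hF0sub
    | succ n ih => exact (hHmono α n).trans ih
  -- the branch points
  have hpointα : ∀ α : ℕ → Bool, ∃ x, ∀ n, x ∈ (H α n).1 :=
    fun α => point (fun n => H α n) (hHmono α) (hHsm α)
  choose x hxmem using hpointα
  -- the map from branches to pieces
  have hΦmem : ∀ α : ℕ → Bool, piece (x α) ∈ {A | A ∈ 𝓐 ∧ (A ∩ B).Nonempty} :=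
    fun α => ⟨hpieceA _, ⟨x α, hpiecemem (x α), hHsubB α 0 (hxmem α 0)⟩⟩
  have key : ∀ γ δ : ℕ → Bool, ∀ m, γ m = false → δ m = true → H γ m = H δ m →
      piece (x γ) = piece (x δ) → False := by
    intro γ δ m hγ hδ hHeq hpeq
    have hxγ : x γ ∈ (nq (H γ m) (m+1)).1 := by
      have h := hxmem γ (m+1)
      rw [hHsucc, hγ] at h
      simpa only [Bool.cond_false] using h
    have hxδ : x δ ∈ (nr (H γ m) (m+1)).1 := by
      have h := hxmem δ (m+1)
      rw [hHsucc, hδ, ← hHeq] at h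
      simpa only [Bool.cond_true] using h
    have hsub2 : piece (x γ) ⊆ satOf 𝓐 (nq (H γ m) (m+1)).1 :=
      fun z hz => ⟨piece (x γ), ⟨hpieceA _, ⟨x γ, hpiecemem _, hxγ⟩⟩, hz⟩
    have hxδ2 : x δ ∈ piece (x γ) := by rw [hpeq]; exact hpiecemem _
    have hmem : x δ ∈ (nr (H γ m) (m+1)).1 ∩ satOf 𝓐 (nq (H γ m) (m+1)).1 :=
      ⟨hxδ, hsub2 hxδ2⟩
    rw [hnd] at hmem
    exact hmem
  have hinj : Function.Injective (fun α : ℕ → Bool => piece (x α)) := by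
    intro α β hαβ
    by_contra hne3
    have hex : ∃ n, α n ≠ β n := by
      by_contra h
      push_neg at h
      exact hne3 (funext h)
    set n := Nat.find hex with hn
    have hdiff : α n ≠ β n := Nat.find_spec hex
    have hagree : ∀ i < n, α i = β i := fun i hi => not_not.1 (Nat.find_min hex hi)
    have hHeq : H α n = H β n := hHagree α β n hagree
    cases hαn : α n
    · have hβn : β n = true := by
        cases hβ : β n
        · exact absurd (hαn.trans hβ.symm) hdiff
        · rfl
      exact key α β n hαn hβn hHeq hαβ
    · have hβn : β n = false := by
        cases hβ : β n
        · rfl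
        · exact absurd (hαn.trans hβ.symm) hdiff
      exact key β α n hβn hαn hHeq.symm hαβ.symm
  -- cardinality computation
  have hle1 : Cardinal.continuum ≤ Cardinal.mk ↥{A | A ∈ 𝓐 ∧ (A ∩ B).Nonempty} := by
    have hinj' : Function.Injective
        (fun α : ℕ → Bool => (⟨piece (x α), hΦmem α⟩ :
          ↥{A | A ∈ 𝓐 ∧ (A ∩ B).Nonempty})) :=
      fun a b h => hinj (congrArg Subtype.val h)
    have hmk : Cardinal.mk (ℕ → Bool) = Cardinal.continuum := by
      rw [Cardinal.mk_arrow]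
      simp [Cardinal.two_power_aleph0]
    calc Cardinal.continuum = Cardinal.mk (ℕ → Bool) := hmk.symm
    _ ≤ _ := Cardinal.mk_le_of_injective hinj'
  have hle2 : Cardinal.mk ↥{A | A ∈ 𝓐 ∧ (A ∩ B).Nonempty} ≤ Cardinal.continuum := by
    have hXcard : Cardinal.mk X = Cardinal.continuum := by
      have e := PolishSpace.measurableEquivOfNotCountable (α := X) (β := ℝ)
        not_countable not_countable
      rw [Cardinal.mk_congr e.toEquiv, Cardinal.mk_real]
    have hinj2 : Function.Injective
        (fun A : ↥{A | A ∈ 𝓐 ∧ (A ∩ B).Nonempty} => (hne A.1 A.2.1).some) := by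
      intro A A' h
      apply Subtype.ext
      by_contra hne4
      have hd := hdisj A.1 A.2.1 A'.1 A'.2.1 hne4
      apply Set.disjoint_left.1 hd (hne A.1 A.2.1).some_mem
      rw [show (hne A.1 A.2.1).some = (hne A'.1 A'.2.1).some from h]
      exact (hne A'.1 A'.2.1).some_mem
    calc Cardinal.mk ↥{A | A ∈ 𝓐 ∧ (A ∩ B).Nonempty}
        ≤ Cardinal.mk X := Cardinal.mk_le_of_injective hinj2
    _ = Cardinal.continuum := hXcard
  exact le_antisymm hle2 hle1
end

section
/- Let G be an uncountable compact Polish abelian topological group and let 𝓘 be a σ-ideal making (G, 𝓘) a Polish ideal space, with 𝓘 closed under translations (A ∈ 𝓘 implies g + A ∈ 𝓘 for every g ∈ G). Assume every 𝓘-positive Borel set contains an 𝓘-positive closed set. Let H be a subgroup of G which is a perfect subset of G (closed, nonempty, without isolated points) and H ∈ 𝓘. Then there exists a set T ⊆ G such that T + H is completely 𝓘-nonmeasurable in G. -/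
open Set Pointwise Cardinal

open Cardinal in
private theorem rec_aux {X I : Type} [LinearOrder I] [WellFoundedLT I]
    (hIio : ∀ i : I, #(Set.Iio i) < Cardinal.continuum)
    (𝒞 : Set (Set X)) (R : X → X → Prop)
    (hsym : ∀ x y, R x y → R y x)
    (e : I → Set X) (heC : ∀ i, e i ∈ 𝒞) (hesurj : ∀ F ∈ 𝒞, ∃ i, e i = F)
    (key : ∀ F ∈ 𝒞, ∀ S : Set X, #S < Cardinal.continuum → ∃ x ∈ F, ∀ y ∈ S, ¬ R x y) :
    ∃ T : Set X, ∀ F ∈ 𝒞, (T ∩ F).Nonempty ∧ ∃ s ∈ F, ∀ t ∈ T, ¬ R s t := by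
  classical
  choose pick hmem havoid using fun (i : I) (S : Set X) (h : #S < Cardinal.continuum) =>
    key (e i) (heC i) S h
  have hrange : ∀ (i : I) (g : {j : I // j < i} → X), #(range g) < Cardinal.continuum :=
    fun i g => lt_of_le_of_lt (Cardinal.mk_range_le (f := g)) (hIio i)
  have hins : ∀ (x : X) (S : Set X), #S < Cardinal.continuum →
      #(insert x S : Set X) < Cardinal.continuum := by
    intro x S hS
    refine (Cardinal.mk_insert_le).trans_lt ?_
    exact Cardinal.add_lt_of_lt Cardinal.aleph0_le_continuum hS
      (Cardinal.one_lt_aleph0.trans_le Cardinal.aleph0_le_continuum)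
  obtain ⟨f, hfix⟩ : ∃ f : I → X × X, ∀ i : I,
      f i = (pick i (range fun p : {j : I // j < i} => (f p.1).2) (hrange i _),
        pick i (insert (pick i (range fun p : {j : I // j < i} => (f p.1).2) (hrange i _))
          (range fun p : {j : I // j < i} => (f p.1).1)) (hins _ _ (hrange i _))) := by
    refine ⟨(IsWellFounded.wf (r := ((· < ·) : I → I → Prop))).fix (fun i prev =>
      (pick i (range fun p : {j : I // j < i} => (prev p.1 p.2).2) (hrange i _),
        pick i (insert (pick i (range fun p : {j : I // j < i} => (prev p.1 p.2).2) (hrange i _))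
          (range fun p : {j : I // j < i} => (prev p.1 p.2).1)) (hins _ _ (hrange i _)))),
      fun i => ?_⟩
    exact WellFounded.fix_eq _ _ i
  have ht_mem : ∀ i, (f i).1 ∈ e i := by
    intro i; rw [hfix i]; exact hmem i _ _
  have ht_avoid : ∀ i, ∀ y ∈ (range fun p : {j : I // j < i} => (f p.1).2), ¬ R (f i).1 y := by
    intro i y hy
    rw [hfix i]; exact havoid i _ _ y hy
  have hs_mem : ∀ i, (f i).2 ∈ e i := by
    intro i; rw [hfix i]; exact hmem i _ _
  have hs_avoid : ∀ i, ∀ y ∈ insert ((f i).1)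
      (range fun p : {j : I // j < i} => (f p.1).1), ¬ R (f i).2 y := by
    intro i y hy
    rw [hfix i] at hy ⊢
    exact havoid i _ _ y hy
  refine ⟨range fun i => (f i).1, fun F hF => ?_⟩
  obtain ⟨i, rfl⟩ := hesurj F hF
  refine ⟨⟨(f i).1, ⟨i, rfl⟩, ht_mem i⟩, (f i).2, hs_mem i, ?_⟩
  rintro t ⟨k, rfl⟩
  rcases lt_trichotomy k i with hk | rfl | hk
  · exact hs_avoid i _ (mem_insert_of_mem _ ⟨⟨k, hk⟩, rfl⟩)
  · exact hs_avoid k _ (mem_insert _ _)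
  · intro hR
    exact ht_avoid k ((f i).2) ⟨⟨i, hk⟩, rfl⟩ (hsym _ _ hR)

theorem stmt_5 {G : Type} [TopologicalSpace G] [PolishSpace G] [CompactSpace G]
    [Uncountable G] [AddCommGroup G] [IsTopologicalAddGroup G]
    [MeasurableSpace G] [BorelSpace G]
    (𝓘 : Set (Set G))
    (hDown : ∀ A B : Set G, A ⊆ B → B ∈ 𝓘 → A ∈ 𝓘)
    (hUnion : ∀ f : ℕ → Set G, (∀ n, f n ∈ 𝓘) → (⋃ n, f n) ∈ 𝓘)
    (hProper : (univ : Set G) ∉ 𝓘)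
    (hSing : ∀ x : G, ({x} : Set G) ∈ 𝓘)
    (hBase : ∀ A ∈ 𝓘, ∃ B : Set G, A ⊆ B ∧ MeasurableSet B ∧ B ∈ 𝓘)
    (hTrans : ∀ (g : G), ∀ A ∈ 𝓘, (fun x => g + x) '' A ∈ 𝓘)
    (hClosedBase : ∀ B : Set G, MeasurableSet B → B ∉ 𝓘 →
      ∃ F : Set G, IsClosed F ∧ F ∉ 𝓘 ∧ F ⊆ B)
    (H : AddSubgroup G) (hPerf : Perfect (H : Set G)) (hH : (H : Set G) ∈ 𝓘) :
    ∃ T : Set G, ∀ B : Set G, MeasurableSet B → B ∉ 𝓘 →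
      ((T + (H : Set G)) ∩ B).Nonempty ∧ (B \ (T + (H : Set G))).Nonempty := by
  classical
  haveI : IsClosed (H : Set G) := hPerf.closed
  -- empty set and countable unions
  have hEmpty : (∅ : Set G) ∈ 𝓘 := hDown ∅ {0} (empty_subset _) (hSing 0)
  have hCU : ∀ S : Set (Set G), S.Countable → (∀ A ∈ S, A ∈ 𝓘) → ⋃₀ S ∈ 𝓘 := by
    intro S hSc hSm
    rcases S.eq_empty_or_nonempty with rfl | hne
    · simpa using hEmpty
    · obtain ⟨g, rfl⟩ := hSc.exists_eq_range hne
      rw [sUnion_range]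
      exact hUnion g fun n => hSm _ ⟨n, rfl⟩
  -- the quotient group
  set Q := G ⧸ H with hQdef
  haveI : TopologicalSpace.MetrizableSpace Q := inferInstance
  letI : MetricSpace Q := TopologicalSpace.metrizableSpaceMetric Q
  haveI : PolishSpace Q := inferInstance
  set q : G → Q := fun x => ((x : G) : Q) with hqdef
  have hqcont : Continuous q := continuous_quot_mk
  -- cosets belong to the ideal
  have hfiber : ∀ x : G, q ⁻¹' {q x} ∈ 𝓘 := by
    intro x
    have : q ⁻¹' {q x} = (fun z => x + z) '' (H : Set G) := by
      ext y
      simp only [mem_preimage, mem_singleton_iff, mem_image]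
      constructor
      · intro h
        have hy : -y + x ∈ H := QuotientAddGroup.eq.mp h
        refine ⟨-x + y, ?_, by abel⟩
        have := H.neg_mem hy
        simpa [neg_add_rev] using this
      · rintro ⟨h, hh, rfl⟩
        exact (QuotientAddGroup.eq.mpr (by simpa using H.neg_mem hh)).symm
    rw [this]
    exact hTrans x _ hH
  -- the key lemma
  have key : ∀ F : Set G, IsClosed F → F ∉ 𝓘 → ∀ S : Set G,
      Cardinal.mk S < Cardinal.continuum → ∃ x ∈ F, ∀ y ∈ S, ¬ (x - y ∈ (H : Set G)) := by
    intro F hFcl hFpos S hS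
    have hFcomp : IsCompact F := hFcl.isCompact
    have hQFcl : IsClosed (q '' F) := (hFcomp.image hqcont).isClosed
    have hQFunc : ¬ (q '' F).Countable := by
      intro hcnt
      apply hFpos
      refine hDown F (⋃₀ ((fun c => q ⁻¹' {c}) '' (q '' F))) ?_ ?_
      · intro x hx
        exact ⟨q ⁻¹' {q x}, ⟨q x, ⟨x, hx, rfl⟩, rfl⟩, rfl⟩
      · refine hCU _ (hcnt.image _) ?_
        rintro A ⟨c, hc, rfl⟩
        obtain ⟨x, -, rfl⟩ := hc
        exact hfiber x
    obtain ⟨g, hgr, -, hginj⟩ := hQFcl.exists_nat_bool_injection_of_not_countable hQFunc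
    have hbig : Cardinal.continuum ≤ #(q '' F) := by
      have : #(ℕ → Bool) ≤ #(q '' F) :=
        Cardinal.mk_le_of_injective (f := fun a => (⟨g a, hgr ⟨a, rfl⟩⟩ : q '' F))
          fun a b hab => hginj (congrArg Subtype.val hab)
      rwa [Cardinal.mk_arrow, Cardinal.mk_bool, Cardinal.mk_nat, Cardinal.lift_id,
        Cardinal.lift_id, Cardinal.two_power_aleph0] at this
    have hnsub : ¬ (q '' F ⊆ q '' S) := by
      intro hsub
      exact absurd (hbig.trans (Cardinal.mk_le_mk_of_subset hsub))
        (not_le.mpr ((Cardinal.mk_image_le).trans_lt hS))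
    obtain ⟨c, hcF, hcS⟩ := not_subset.mp hnsub
    obtain ⟨x, hxF, rfl⟩ := hcF
    refine ⟨x, hxF, fun y hy hR => hcS ⟨y, hy, ?_⟩⟩
    exact QuotientAddGroup.eq.mpr (by rw [neg_add_eq_sub]; exact hR)
  -- the family of closed positive sets has size ≤ continuum
  set 𝒞 : Set (Set G) := {F | IsClosed F ∧ F ∉ 𝓘} with h𝒞
  have hcard : #𝒞 ≤ Cardinal.continuum := by
    obtain ⟨b, hbc, -, hbasis⟩ := TopologicalSpace.exists_countable_basis G
    have hinj : Function.Injective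
        (fun F : 𝒞 => {U : b | (U : Set G) ⊆ (↑F : Set G)ᶜ}) := by
      intro F F' h
      apply Subtype.ext
      have e1 := hbasis.open_eq_sUnion' F.2.1.isOpen_compl
      have e2 := hbasis.open_eq_sUnion' F'.2.1.isOpen_compl
      have : {s | s ∈ b ∧ s ⊆ (↑F : Set G)ᶜ} = {s | s ∈ b ∧ s ⊆ (↑F' : Set G)ᶜ} := by
        ext s
        constructor
        · rintro ⟨hsb, hss⟩
          have hm : (⟨s, hsb⟩ : b) ∈ {U : b | (U : Set G) ⊆ (↑F : Set G)ᶜ} := hss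
          rw [show {U : b | (U : Set G) ⊆ (↑F : Set G)ᶜ}
            = {U : b | (U : Set G) ⊆ (↑F' : Set G)ᶜ} from h] at hm
          exact ⟨hsb, hm⟩
        · rintro ⟨hsb, hss⟩
          have hm : (⟨s, hsb⟩ : b) ∈ {U : b | (U : Set G) ⊆ (↑F' : Set G)ᶜ} := hss
          rw [← show {U : b | (U : Set G) ⊆ (↑F : Set G)ᶜ}
            = {U : b | (U : Set G) ⊆ (↑F' : Set G)ᶜ} from h] at hm
          exact ⟨hsb, hm⟩
      have : (↑F : Set G)ᶜ = (↑F' : Set G)ᶜ := by rw [e1, e2, this]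
      exact compl_injective this
    calc #𝒞 ≤ #(Set b) := Cardinal.mk_le_of_injective hinj
      _ = 2 ^ #b := Cardinal.mk_set
      _ ≤ 2 ^ Cardinal.aleph0 := by
          refine Cardinal.power_le_power_left two_ne_zero ?_
          exact Cardinal.mk_le_aleph0_iff.mpr hbc.to_subtype
      _ = Cardinal.continuum := Cardinal.two_power_aleph0
  -- set up the enumeration and apply the recursion lemma
  haveI : Nonempty 𝒞 := ⟨⟨univ, isClosed_univ, hProper⟩⟩
  obtain ⟨j⟩ : Nonempty (𝒞 ↪ Cardinal.continuum.ord.ToType) := by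
    rw [← Cardinal.le_def, Cardinal.mk_toType, Cardinal.card_ord]
    exact hcard
  set e : Cardinal.continuum.ord.ToType → Set G := fun i => ↑(Function.invFun j i) with he
  have heC : ∀ i, e i ∈ 𝒞 := fun i => (Function.invFun j i).2
  have hesurj : ∀ F ∈ 𝒞, ∃ i, e i = F := by
    intro F hF
    exact ⟨j ⟨F, hF⟩, by rw [he]; simp [Function.leftInverse_invFun j.injective ⟨F, hF⟩]⟩
  obtain ⟨T, hT⟩ := rec_aux (X := G) (fun i => Cardinal.mk_Iio_ord_toType i) 𝒞
    (fun x y => x - y ∈ (H : Set G)) (fun x y hxy => by simpa [neg_sub] using H.neg_mem hxy)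
    e heC hesurj (fun F hF S hS => key F hF.1 hF.2 S hS)
  refine ⟨T, fun B hB hBpos => ?_⟩
  obtain ⟨F, hFcl, hFpos, hFB⟩ := hClosedBase B hB hBpos
  obtain ⟨⟨t, htT, htF⟩, s, hsF, hsAvoid⟩ := hT F ⟨hFcl, hFpos⟩
  constructor
  · exact ⟨t, ⟨t, htT, 0, H.zero_mem, add_zero t⟩, hFB htF⟩
  · refine ⟨s, hFB hsF, fun hmem => ?_⟩
    obtain ⟨t', ht', h, hh, hsum⟩ := hmem
    refine hsAvoid t' ht' ?_
    rw [← hsum]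
    simpa using hh
end

section
/- Let (X, 𝓘) be a Polish ideal space and Y a Polish space. Suppose f : X → Y is B̄(X)-measurable (the preimage of every open subset of Y belongs to the 𝓘-completion B̄(X)) and f⁻¹({y}) ∈ 𝓘 for every y ∈ Y. Then there exists a set T ⊆ Y such that f⁻¹(T) is completely 𝓘-nonmeasurable. -/
open Set MeasureTheory Cardinal

namespace StmtAux

/-- cylinder -/
def Cyl (x : ℕ → ℕ) (n : ℕ) : Set (ℕ → ℕ) := {z | ∀ k < n, z k = x k}

lemma cyl_self (x : ℕ → ℕ) (n : ℕ) : x ∈ Cyl x n := fun _ _ => rfl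

lemma cyl_anti {x : ℕ → ℕ} {n m : ℕ} (h : n ≤ m) : Cyl x m ⊆ Cyl x n :=
  fun _ hz k hk => hz k (lt_of_lt_of_le hk h)

lemma cyl_trans {z y x : ℕ → ℕ} {n m : ℕ} (hzy : z ∈ Cyl y m) (hyx : y ∈ Cyl x n)
    (hnm : n ≤ m) : z ∈ Cyl x n :=
  fun k hk => (hzy k (lt_of_lt_of_le hk hnm)).trans (hyx k hk)

/-- an open set containing x contains a cylinder around x -/
lemma exists_cyl_subset {U : Set (ℕ → ℕ)} (hU : IsOpen U) {x : ℕ → ℕ} (hx : x ∈ U) :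
    ∃ n, Cyl x n ⊆ U := by
  obtain ⟨I, u, hu, hsub⟩ := isOpen_pi_iff.1 hU x hx
  refine ⟨I.sup id + 1, fun z hz => hsub ?_⟩
  intro a ha
  have : z a = x a := hz a (Nat.lt_succ_of_le (Finset.le_sup (f := id) ha))
  rw [this]
  exact (hu a ha).2

lemma psp_aux {Y : Type} [TopologicalSpace Y] [T2Space Y] (g : (ℕ → ℕ) → Y)
    (hg : Continuous g) (hun : ¬ (Set.range g).Countable) :
    ∃ h : (ℕ → Bool) → Y, Function.Injective h ∧ Set.range h ⊆ Set.range g := by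
  classical
  set H : Set (ℕ → ℕ) := {x | ∀ n, ¬ (g '' Cyl x n).Countable} with hH
  -- image of complement of H is countable
  have hHc : (g '' Hᶜ).Countable := by
    have hsub : g '' Hᶜ ⊆ ⋃ l : List ℕ,
        (if (g '' Cyl (fun k => l.getD k 0) l.length).Countable
          then g '' Cyl (fun k => l.getD k 0) l.length else ∅) := by
      rintro y ⟨x, hx, rfl⟩
      simp only [hH, mem_compl_iff, mem_setOf_eq, not_forall, not_not] at hx
      obtain ⟨n, hn⟩ := hx
      have hlen : (List.ofFn (fun i : Fin n => x i)).length = n := List.length_ofFn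
      have hget : ∀ k, k < n → (List.ofFn (fun i : Fin n => x i)).getD k 0 = x k := by
        intro k hk
        rw [List.getD_eq_getElem _ _ (by simpa [hlen] using hk)]
        simp
      have hcyl : Cyl (fun k => (List.ofFn (fun i : Fin n => x i)).getD k 0)
          (List.ofFn (fun i : Fin n => x i)).length = Cyl x n := by
        rw [hlen]
        ext z
        simp only [Cyl, mem_setOf_eq]
        exact ⟨fun hz k hk => (hz k hk).trans (hget k hk),
          fun hz k hk => (hz k hk).trans (hget k hk).symm⟩
      refine mem_iUnion.2 ⟨List.ofFn (fun i : Fin n => x i), ?_⟩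
      rw [hcyl, if_pos hn]
      exact ⟨x, cyl_self x n, rfl⟩
    refine Set.Countable.mono hsub (Set.countable_iUnion fun l => ?_)
    split
    · assumption
    · exact countable_empty
  -- key extension step
  have claimKey : ∀ x ∈ H, ∀ n : ℕ, ∃ x0 x1 : ℕ → ℕ, ∃ n' : ℕ,
      (x0 ∈ Cyl x n ∩ H) ∧ (x1 ∈ Cyl x n ∩ H) ∧ n < n' ∧
      ∀ z0 z1, z0 ∈ Cyl x0 n' → z1 ∈ Cyl x1 n' → g z0 ≠ g z1 := by
    intro x hx n
    have hA : ¬ (g '' Cyl x n \ g '' Hᶜ).Countable := by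
      intro hcc
      apply hx n
      have hsub2 : g '' Cyl x n ⊆ (g '' Cyl x n \ g '' Hᶜ) ∪ g '' Hᶜ := fun y hy => by
        by_cases h : y ∈ g '' Hᶜ
        · exact Or.inr h
        · exact Or.inl ⟨hy, h⟩
      exact (hcc.union hHc).mono hsub2
    have hnontriv : (g '' Cyl x n \ g '' Hᶜ).Nontrivial := by
      rw [← Set.not_subsingleton_iff]
      exact fun hs => hA hs.countable
    obtain ⟨y0, hy0, y1, hy1, hne⟩ := hnontriv
    obtain ⟨x0, hx0c, rfl⟩ := hy0.1
    obtain ⟨x1, hx1c, rfl⟩ := hy1.1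
    have hx0H : x0 ∈ H := by
      by_contra h; exact hy0.2 ⟨x0, h, rfl⟩
    have hx1H : x1 ∈ H := by
      by_contra h; exact hy1.2 ⟨x1, h, rfl⟩
    obtain ⟨U, V, hU, hV, hgU, hgV, hUV⟩ := t2_separation hne
    obtain ⟨m0, hm0⟩ := exists_cyl_subset (hU.preimage hg) (mem_preimage.2 hgU)
    obtain ⟨m1, hm1⟩ := exists_cyl_subset (hV.preimage hg) (mem_preimage.2 hgV)
    refine ⟨x0, x1, max (max m0 m1) (n+1), ⟨hx0c, hx0H⟩, ⟨hx1c, hx1H⟩,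
      lt_of_lt_of_le (Nat.lt_succ_self n) (le_max_right _ _), ?_⟩
    intro z0 z1 hz0 hz1
    have h0 : g z0 ∈ U := hm0 (cyl_anti (le_trans (le_max_left m0 m1) (le_max_left _ _)) hz0)
    have h1 : g z1 ∈ V := hm1 (cyl_anti (le_trans (le_max_right m0 m1) (le_max_left _ _)) hz1)
    intro heq
    exact (Set.disjoint_left.1 hUV h0) (heq ▸ h1)
  -- H is nonempty
  have hHne : H.Nonempty := by
    by_contra h
    rw [Set.not_nonempty_iff_eq_empty] at h
    apply hun
    have hss : Set.range g ⊆ g '' Hᶜ := by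
      rw [h, Set.compl_empty, Set.image_univ]
    exact hHc.mono hss
  obtain ⟨xs, hxs⟩ := hHne
  choose X0 X1 NN h0 h1 hlt hdisj using claimKey
  -- the tree of nodes
  let step : Bool → ({x : ℕ → ℕ // x ∈ H} × ℕ) → ({x : ℕ → ℕ // x ∈ H} × ℕ) := fun i p =>
    (⟨cond i (X1 p.1.1 p.1.2 p.2) (X0 p.1.1 p.1.2 p.2),
      by cases i
         · exact (h0 p.1.1 p.1.2 p.2).2
         · exact (h1 p.1.1 p.1.2 p.2).2⟩,
      NN p.1.1 p.1.2 p.2)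
  let D : List Bool → ({x : ℕ → ℕ // x ∈ H} × ℕ) := fun w => w.foldr step (⟨xs, hxs⟩, 0)
  have hDcons : ∀ i w, D (i :: w) = step i (D w) := fun i w => rfl
  set xw : List Bool → (ℕ → ℕ) := fun w => (D w).1.1 with hxw
  set nw : List Bool → ℕ := fun w => (D w).2 with hnw
  have hchild_mem : ∀ (i : Bool) (w : List Bool), xw (i :: w) ∈ Cyl (xw w) (nw w) := by
    intro i w
    cases i
    · exact (h0 (xw w) (D w).1.2 (nw w)).1
    · exact (h1 (xw w) (D w).1.2 (nw w)).1
  have hchild_lt : ∀ (i : Bool) (w : List Bool), nw w < nw (i :: w) := by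
    intro i w; exact hlt (xw w) (D w).1.2 (nw w)
  have hsib : ∀ w : List Bool, ∀ z0 z1, z0 ∈ Cyl (xw (false :: w)) (nw (false :: w)) →
      z1 ∈ Cyl (xw (true :: w)) (nw (true :: w)) → g z0 ≠ g z1 := by
    intro w; exact hdisj (xw w) (D w).1.2 (nw w)
  -- branches
  let node : (ℕ → Bool) → ℕ → List Bool := fun a m => Nat.rec [] (fun k ih => a k :: ih) m
  have hnode : ∀ a m, node a (m+1) = a m :: node a m := fun a m => rfl
  have nw_le : ∀ a : ℕ → Bool, ∀ m j : ℕ, m ≤ j → nw (node a m) ≤ nw (node a j) := by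
    intro a m j hmj
    induction j with
    | zero => simpa [Nat.le_zero.1 hmj]
    | succ j ih =>
      rcases Nat.lt_or_ge m (j+1) with h | h
      · exact le_trans (ih (Nat.lt_succ_iff.1 h)) (le_of_lt (hchild_lt _ _))
      · have : m = j + 1 := le_antisymm hmj h
        simp [this]
  have nw_ge : ∀ a : ℕ → Bool, ∀ m : ℕ, m ≤ nw (node a m) := by
    intro a m
    induction m with
    | zero => exact Nat.zero_le _
    | succ m ih => exact Nat.succ_le_of_lt (lt_of_le_of_lt ih (hchild_lt _ _))
  have agree : ∀ a : ℕ → Bool, ∀ m j : ℕ, m ≤ j →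
      xw (node a j) ∈ Cyl (xw (node a m)) (nw (node a m)) := by
    intro a m j hmj
    induction j with
    | zero => have : m = 0 := Nat.le_zero.1 hmj; subst this; exact cyl_self _ _
    | succ j ih =>
      rcases Nat.lt_or_ge m (j+1) with h | h
      · have hm_le_j : m ≤ j := Nat.lt_succ_iff.1 h
        exact cyl_trans (hchild_mem (a j) (node a j)) (ih hm_le_j) (nw_le a m j hm_le_j)
      · have : m = j + 1 := le_antisymm hmj h
        subst this; exact cyl_self _ _
  let xa : (ℕ → Bool) → (ℕ → ℕ) := fun a k => xw (node a (k+1)) k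
  have branch_mem : ∀ a : ℕ → Bool, ∀ m : ℕ, xa a ∈ Cyl (xw (node a m)) (nw (node a m)) := by
    intro a m k hk
    rcases le_or_gt m (k+1) with h | h
    · exact agree a m (k+1) h k hk
    · have h' : k + 1 ≤ m := le_of_lt h
      have hk' : k < nw (node a (k+1)) := lt_of_lt_of_le (Nat.lt_succ_self k) (nw_ge a (k+1))
      exact (agree a (k+1) m h' k hk').symm
  refine ⟨fun a => g (xa a), ?_, ?_⟩
  · -- injectivity
    intro a b hab
    by_contra hne
    have hex : ∃ m, a m ≠ b m := by
      by_contra h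
      push_neg at h
      exact hne (funext h)
    set m := Nat.find hex with hm
    have hmne : a m ≠ b m := Nat.find_spec hex
    have hprev : ∀ k < m, a k = b k := fun k hk => by
      by_contra h; exact Nat.find_min hex hk h
    have hnodeeq : ∀ j ≤ m, node a j = node b j := by
      intro j hj
      induction j with
      | zero => rfl
      | succ j ih =>
        rw [hnode, hnode, hprev j hj, ih (le_of_lt hj)]
    have hnm : node a m = node b m := hnodeeq m le_rfl
    rcases Bool.eq_false_or_eq_true (a m) with ha | ha
    · -- a m = true, b m = false
      have hb : b m = false := by
        cases hbm : b m
        · rfl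
        · exact absurd (ha.trans hbm.symm) hmne
      refine hsib (node a m) (xa b) (xa a) ?_ ?_ hab.symm
      · have := branch_mem b (m+1)
        rwa [hnode, hb, ← hnm] at this
      · have := branch_mem a (m+1)
        rwa [hnode, ha] at this
    · -- a m = false, b m = true
      have hb : b m = true := by
        cases hbm : b m
        · exact absurd (ha.trans hbm.symm) hmne
        · rfl
      refine hsib (node a m) (xa a) (xa b) ?_ ?_ hab
      · have := branch_mem a (m+1)
        rwa [hnode, ha] at this
      · have := branch_mem b (m+1)
        rwa [hnode, hb, ← hnm] at this
  · rintro y ⟨a, rfl⟩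
    exact ⟨xa a, rfl⟩

abbrev Idx : Type := Cardinal.continuum.ord.ToType

end StmtAux

theorem stmt_6 {X : Type} [TopologicalSpace X] [PolishSpace X] [Uncountable X]
    [MeasurableSpace X] [BorelSpace X]
    {Y : Type} [TopologicalSpace Y] [PolishSpace Y] [MeasurableSpace Y] [BorelSpace Y]
    (𝓘 : Set (Set X))
    (hDown : ∀ A B : Set X, A ⊆ B → B ∈ 𝓘 → A ∈ 𝓘)
    (hUnion : ∀ f : ℕ → Set X, (∀ n, f n ∈ 𝓘) → (⋃ n, f n) ∈ 𝓘)
    (hProper : (univ : Set X) ∉ 𝓘)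
    (hSing : ∀ x : X, ({x} : Set X) ∈ 𝓘)
    (hBase : ∀ A ∈ 𝓘, ∃ B : Set X, A ⊆ B ∧ MeasurableSet B ∧ B ∈ 𝓘)
    (f : X → Y)
    (hf : ∀ U : Set Y, IsOpen U →
      MeasurableSet[MeasurableSpace.generateFrom ({s : Set X | MeasurableSet s} ∪ 𝓘)] (f ⁻¹' U))
    (hfib : ∀ y : Y, f ⁻¹' {y} ∈ 𝓘) :
    ∃ T : Set Y, ∀ B : Set X, MeasurableSet B → B ∉ 𝓘 →
      (f ⁻¹' T ∩ B).Nonempty ∧ (B \ f ⁻¹' T).Nonempty := by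
  classical
  haveI : Nonempty X := inferInstance
  haveI : T2Space Y := inferInstance
  set x₀ : X := Classical.arbitrary X with hx₀
  have hEmpty : (∅ : Set X) ∈ 𝓘 := hDown ∅ {x₀} (empty_subset _) (hSing x₀)
  -- union of two sets in the ideal
  have hunion2 : ∀ A B : Set X, A ∈ 𝓘 → B ∈ 𝓘 → A ∪ B ∈ 𝓘 := by
    intro A B hA hB
    have : A ∪ B = ⋃ n : ℕ, (Nat.casesOn n A fun _ => B : Set X) := by
      ext x
      constructor
      · rintro (hx | hx)
        · exact mem_iUnion.2 ⟨0, hx⟩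
        · exact mem_iUnion.2 ⟨1, hx⟩
      · rintro hx
        obtain ⟨n, hn⟩ := mem_iUnion.1 hx
        cases n with
        | zero => exact Or.inl hn
        | succ k => exact Or.inr hn
    rw [this]
    exact hUnion _ (by rintro (_ | n) <;> assumption)
  -- every G-measurable set is a Borel set modulo the ideal
  have hgen : ∀ s : Set X,
      MeasurableSet[MeasurableSpace.generateFrom ({s : Set X | MeasurableSet s} ∪ 𝓘)] s →
      ∃ b : Set X, MeasurableSet b ∧ (s \ b ∪ b \ s) ∈ 𝓘 := by
    intro s hs
    induction s, hs using MeasurableSpace.generateFrom_induction with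
    | hC t htC _ =>
      rcases htC with ht | ht
      · exact ⟨t, ht, by simpa using hEmpty⟩
      · refine ⟨∅, MeasurableSet.empty, ?_⟩
        have : (t \ ∅ ∪ ∅ \ t) = t := by simp
        rw [this]; exact ht
    | empty => exact ⟨∅, MeasurableSet.empty, by simpa using hEmpty⟩
    | compl t ht ih =>
      obtain ⟨b, hb, hd⟩ := ih
      refine ⟨bᶜ, hb.compl, ?_⟩
      have : (tᶜ \ bᶜ ∪ bᶜ \ tᶜ) = (t \ b ∪ b \ t) := by
        ext x; simp only [mem_union, mem_diff, mem_compl_iff]; tauto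
      rw [this]; exact hd
    | iUnion s hs ih =>
      choose b hb hd using ih
      refine ⟨⋃ n, b n, MeasurableSet.iUnion hb, ?_⟩
      refine hDown _ (⋃ n, (s n \ b n ∪ b n \ s n)) ?_ (hUnion _ hd)
      rintro x (hx | hx)
      · obtain ⟨_, ⟨⟨n, rfl⟩, hxn⟩⟩ := hx.1
        exact mem_iUnion.2 ⟨n, Or.inl ⟨hxn, fun hxb => hx.2 (mem_iUnion.2 ⟨n, hxb⟩)⟩⟩
      · obtain ⟨_, ⟨⟨n, rfl⟩, hxn⟩⟩ := hx.1
        exact mem_iUnion.2 ⟨n, Or.inr ⟨hxn, fun hxs => hx.2 (mem_iUnion.2 ⟨n, hxs⟩)⟩⟩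
  -- countable basis of Y
  obtain ⟨bY, hbYc, hbYne, hbYbasis⟩ := TopologicalSpace.exists_countable_basis Y
  obtain ⟨u, hu⟩ : ∃ u : ℕ → Set Y, insert ∅ bY = range u :=
    (hbYc.insert ∅).exists_eq_range (insert_nonempty _ _)
  have huo : ∀ n, IsOpen (u n) := by
    intro n
    have : u n ∈ insert ∅ bY := by rw [hu]; exact mem_range_self n
    rcases this with h | h
    · rw [h]; exact isOpen_empty
    · exact hbYbasis.isOpen h
  -- choose Borel approximations and the exceptional set N
  have hbn : ∀ n : ℕ, ∃ b : Set X, MeasurableSet b ∧ ∃ D : Set X,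
      (f ⁻¹' u n \ b ∪ b \ f ⁻¹' u n) ⊆ D ∧ MeasurableSet D ∧ D ∈ 𝓘 := by
    intro n
    obtain ⟨b, hb, hd⟩ := hgen _ (hf (u n) (huo n))
    obtain ⟨D, hD1, hD2, hD3⟩ := hBase _ hd
    exact ⟨b, hb, D, hD1, hD2, hD3⟩
  choose bb hbb DD hDD1 hDD2 hDD3 using hbn
  set N : Set X := ⋃ n, DD n with hNdef
  have hNm : MeasurableSet N := MeasurableSet.iUnion hDD2
  have hNI : N ∈ 𝓘 := hUnion _ hDD3
  set y₀ : Y := f x₀ with hy₀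
  set g' : X → Y := fun x => if x ∈ N then y₀ else f x with hg'
  have hg'f : ∀ x, x ∉ N → g' x = f x := fun x hx => if_neg hx
  -- g' is Borel measurable
  have hg'meas : Measurable g' := by
    have hinst : ‹MeasurableSpace Y› = MeasurableSpace.generateFrom (insert ∅ bY) := by
      rw [BorelSpace.measurable_eq (α := Y), hbYbasis.borel_eq_generateFrom,
        MeasurableSpace.generateFrom_insert_empty]
    have hmg : @Measurable X Y _ (MeasurableSpace.generateFrom (insert ∅ bY)) g' := by
      apply measurable_generateFrom
      intro t ht
      rw [hu] at ht
      obtain ⟨n, rfl⟩ := ht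
      have hpre : g' ⁻¹' u n = (bb n \ N) ∪ (if y₀ ∈ u n then N else ∅) := by
        ext x
        by_cases hx : x ∈ N
        · by_cases hy : y₀ ∈ u n <;>
            simp [hg', mem_preimage, hx, hy]
        · have hiff : f x ∈ u n ↔ x ∈ bb n := by
            constructor
            · intro hfx
              by_contra hxb
              exact hx (mem_iUnion.2 ⟨n, hDD1 n (Or.inl ⟨hfx, hxb⟩)⟩)
            · intro hxb
              by_contra hfx
              exact hx (mem_iUnion.2 ⟨n, hDD1 n (Or.inr ⟨hxb, hfx⟩)⟩)
          by_cases hy : y₀ ∈ u n <;>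
            simp [hg', mem_preimage, hx, hy, hiff]
      rw [hpre]
      refine ((hbb n).diff hNm).union ?_
      split
      · exact hNm
      · exact MeasurableSet.empty
    exact hmg.mono le_rfl (le_of_eq hinst)
  -- key: images of positive Borel sets contain a copy of the Cantor set
  have himg : ∀ B : Set X, MeasurableSet B → B ∉ 𝓘 →
      ∃ h : (ℕ → Bool) → Y, Function.Injective h ∧ range h ⊆ f '' (B \ N) := by
    intro B hBm hBI
    have himgeq : f '' (B \ N) = g' '' (B \ N) :=
      (Set.image_congr (fun x hx => (hg'f x hx.2).symm))
    have huncount : ¬ (f '' (B \ N)).Countable := by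
      intro hc
      apply hBI
      rcases (f '' (B \ N)).eq_empty_or_nonempty with hS | hS
      · refine hDown B N ?_ hNI
        intro x hx
        by_contra hxN
        exact (hS ▸ ⟨x, ⟨hx, hxN⟩, rfl⟩ : f x ∈ (∅ : Set Y)).elim
      · obtain ⟨v, hv⟩ := hc.exists_eq_range hS
        have hcov : B ⊆ N ∪ ⋃ k, f ⁻¹' {v k} := by
          intro x hx
          by_cases hxN : x ∈ N
          · exact Or.inl hxN
          · have : f x ∈ range v := hv ▸ ⟨x, ⟨hx, hxN⟩, rfl⟩
            obtain ⟨k, hk⟩ := this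
            exact Or.inr (mem_iUnion.2 ⟨k, by simp [← hk]⟩)
        exact hDown _ _ hcov (hunion2 _ _ hNI (hUnion _ fun k => hfib (v k)))
    have hana : AnalyticSet (g' '' (B \ N)) := (hBm.diff hNm).analyticSet_image hg'meas
    rw [MeasureTheory.AnalyticSet] at hana
    rcases hana with h0 | ⟨g, hgc, hgr⟩
    · rw [himgeq, h0] at huncount
      exact absurd countable_empty huncount
    · have huc' : ¬ (range g).Countable := by rwa [hgr, ← himgeq]
      obtain ⟨h, hinj, hsub⟩ := StmtAux.psp_aux g hgc huc'
      exact ⟨h, hinj, by rwa [hgr, ← himgeq] at hsub⟩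
  -- hence: we can avoid any small set of values
  have hbig : ∀ B : Set X, MeasurableSet B → B ∉ 𝓘 → ∀ S : Set Y, #S < 𝔠 →
      ∃ x, x ∈ B ∧ f x ∉ S := by
    intro B hBm hBI S hS
    by_contra hno
    push_neg at hno
    obtain ⟨h, hinj, hsub⟩ := himg B hBm hBI
    have hcard : 𝔠 ≤ #S := by
      have hmap : ∀ a : ℕ → Bool, h a ∈ S := by
        intro a
        obtain ⟨x, hx, hfx⟩ := hsub (mem_range_self a)
        rw [← hfx]
        exact hno x hx.1
      have : #(ℕ → Bool) ≤ #S :=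
        Cardinal.mk_le_of_injective (f := fun a => (⟨h a, hmap a⟩ : S))
          (fun a b hab => hinj (by simpa using hab))
      rwa [← Cardinal.power_def, Cardinal.mk_bool, Cardinal.mk_nat,
        Cardinal.two_power_aleph0] at this
    exact absurd hS (not_lt.2 hcard)
  -- the positive Borel sets form a small family
  obtain ⟨bX, hbXc, hbXne, hbXbasis⟩ := TopologicalSpace.exists_countable_basis X
  have hPcard : #{B : Set X // MeasurableSet B ∧ B ∉ 𝓘} ≤ 𝔠 := by
    have hXeq : ‹MeasurableSpace X› = MeasurableSpace.generateFrom bX := by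
      rw [BorelSpace.measurable_eq (α := X), hbXbasis.borel_eq_generateFrom]
    have h1 : #{t : Set X | MeasurableSet t} ≤ 𝔠 := by
      rw [hXeq]
      exact MeasurableSpace.cardinal_measurableSet_le_continuum
        (hbXc.le_aleph0.trans Cardinal.aleph0_le_continuum)
    refine le_trans (Cardinal.mk_le_of_injective
      (f := fun p : {B : Set X // MeasurableSet B ∧ B ∉ 𝓘} =>
        (⟨p.1, p.2.1⟩ : {t : Set X | MeasurableSet t})) ?_) h1
    intro p q hpq
    exact Subtype.ext (by simpa using hpq)
  -- transfinite construction
  obtain ⟨emb⟩ : Nonempty ({B : Set X // MeasurableSet B ∧ B ∉ 𝓘} ↪ StmtAux.Idx) := by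
    refine (Cardinal.le_def _ _).1 ?_
    rw [Cardinal.mk_ord_toType]
    exact hPcard
  -- picking two new points in a positive Borel set
  have hpick : ∀ (p : {B : Set X // MeasurableSet B ∧ B ∉ 𝓘}) (S : Set Y), #S < 𝔠 →
      ∃ x y : X, x ∈ p.1 ∧ y ∈ p.1 ∧ f x ∉ S ∧ f y ∉ S ∧ f x ≠ f y := by
    intro p S hS
    obtain ⟨x, hxB, hfx⟩ := hbig p.1 p.2.1 p.2.2 S hS
    have hS' : #(insert (f x) S : Set Y) < 𝔠 := by
      refine lt_of_le_of_lt Cardinal.mk_insert_le ?_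
      exact Cardinal.add_lt_of_lt Cardinal.aleph0_le_continuum hS
        (lt_trans Cardinal.one_lt_aleph0 Cardinal.aleph0_lt_continuum)
    obtain ⟨y, hyB, hfy⟩ := hbig p.1 p.2.1 p.2.2 (insert (f x) S) hS'
    exact ⟨x, y, hxB, hyB, hfx, fun h => hfy (mem_insert_of_mem _ h),
      fun h => hfy (h ▸ mem_insert _ _)⟩
  choose pc1 pc2 hpcx hpcy hpcfx hpcfy hpcne using hpick
  set prevS : ∀ i : StmtAux.Idx, (∀ j : StmtAux.Idx, j < i → X × X) → Set Y := fun i v =>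
    range (fun jb : (Iio i) × Bool =>
      f (cond jb.2 (v jb.1.1 jb.1.2).1 (v jb.1.1 jb.1.2).2)) with hprevS
  have hprevcard : ∀ i v, #(prevS i v) < 𝔠 := by
    intro i v
    refine lt_of_le_of_lt Cardinal.mk_range_le ?_
    have h2 : #((↥(Iio i) × Bool)) = #(↥(Iio i)) * #Bool := by
      rw [Cardinal.mk_prod, Cardinal.lift_id, Cardinal.lift_id]
    rw [h2]
    refine Cardinal.mul_lt_of_lt Cardinal.aleph0_le_continuum
      (Cardinal.mk_Iio_ord_toType i) ?_
    rw [Cardinal.mk_bool]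
    exact lt_trans (Cardinal.nat_lt_aleph0 2) Cardinal.aleph0_lt_continuum
  set step : ∀ i : StmtAux.Idx, (∀ j : StmtAux.Idx, j < i → X × X) → X × X := fun i v =>
    if h : ∃ p : {B : Set X // MeasurableSet B ∧ B ∉ 𝓘}, emb p = i then
      (pc1 h.choose (prevS i v) (hprevcard i v), pc2 h.choose (prevS i v) (hprevcard i v))
    else (x₀, x₀) with hstep
  have wf : WellFounded ((· < ·) : StmtAux.Idx → StmtAux.Idx → Prop) := (inferInstance : WellFoundedLT StmtAux.Idx).wf
  set F : StmtAux.Idx → X × X := WellFounded.fix wf step with hFdef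
  have hF : ∀ i, F i = step i (fun j _ => F j) := fun i => WellFounded.fix_eq wf step i
  have hFi : ∀ (i : StmtAux.Idx) (h : ∃ p : {B : Set X // MeasurableSet B ∧ B ∉ 𝓘}, emb p = i),
      F i = (pc1 h.choose (prevS i (fun j _ => F j)) (hprevcard i (fun j _ => F j)),
             pc2 h.choose (prevS i (fun j _ => F j)) (hprevcard i (fun j _ => F j))) := by
    intro i h
    rw [hF i, hstep]
    exact dif_pos h
  refine ⟨{y : Y | ∃ i : StmtAux.Idx, (∃ p : {B : Set X // MeasurableSet B ∧ B ∉ 𝓘}, emb p = i) ∧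
    y = f (F i).1}, ?_⟩
  intro B hBm hBI
  set p : {B : Set X // MeasurableSet B ∧ B ∉ 𝓘} := ⟨B, hBm, hBI⟩ with hp
  have hi : ∃ q : {B : Set X // MeasurableSet B ∧ B ∉ 𝓘}, emb q = emb p := ⟨p, rfl⟩
  have hchoose : hi.choose = p := emb.injective hi.choose_spec
  have hFip := hFi (emb p) hi
  rw [hchoose] at hFip
  constructor
  · refine ⟨(F (emb p)).1, ⟨emb p, hi, rfl⟩, ?_⟩
    rw [hFip]
    exact hpcx p _ _
  · refine ⟨(F (emb p)).2, ?_, ?_⟩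
    · rw [hFip]
      exact hpcy p _ _
    · rintro ⟨j, hj, heq⟩
      have hFjp := hFi j hj
      rcases lt_trichotomy j (emb p) with hlt | hjeq | hgt
      · -- f (F j).1 belongs to prevS (emb p)
        have hmem : f (F j).1 ∈ prevS (emb p) (fun k _ => F k) :=
          ⟨(⟨⟨j, hlt⟩, true⟩ : ↥(Iio (emb p)) × Bool), rfl⟩
        have : f (F (emb p)).2 ∉ prevS (emb p) (fun k _ => F k) := by
          rw [hFip]
          exact hpcfy p _ _
        rw [heq] at this
        exact this hmem
      · subst hjeq
        rw [hchoose] at hFjp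
        have : f (F (emb p)).1 ≠ f (F (emb p)).2 := by
          rw [hFip]
          exact hpcne p _ _
        exact this (heq.symm)
      · have hmem : f (F (emb p)).2 ∈ prevS j (fun k _ => F k) :=
          ⟨(⟨⟨emb p, hgt⟩, false⟩ : ↥(Iio j) × Bool), rfl⟩
        have : f (F j).1 ∉ prevS j (fun k _ => F k) := by
          rw [hFjp]
          exact hpcfx hj.choose _ _
        rw [heq] at hmem
        exact this hmem
end

section
/- Let (X, 𝓘) be a Polish ideal space with 𝓘 c.c.c., let Y be a Polish space, and let I ∈ 𝓘. Suppose f : X ∖ I → Y is Borel measurable (with respect to the subspace Borel structure on X ∖ I) and f⁻¹({y}) ∈ 𝓘 for every y ∈ Y. Then there exists a set T ⊆ Y such that f⁻¹(T) is a completely 𝓘-nonmeasurable subset of X. -/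
open Set Function CantorScheme

open Set Function CantorScheme

/-- Perfect set property-ish for continuous images of Polish spaces: if the range is
uncountable, there is an injection of the Cantor space into the range. -/
theorem aux_cantor_inj_range {Z Y : Type*} [TopologicalSpace Z] [PolishSpace Z]
    [TopologicalSpace Y] [PolishSpace Y] {g : Z → Y} (hg : Continuous g)
    (hunc : ¬(Set.range g).Countable) :
    ∃ h : (ℕ → Bool) → Y, Function.Injective h ∧ Set.range h ⊆ Set.range g := by
  letI := TopologicalSpace.upgradeIsCompletelyMetrizable Z
  letI := TopologicalSpace.upgradeIsCompletelyMetrizable Y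
  set W : Set Z := {z | ∀ U : Set Z, IsOpen U → z ∈ U → ¬(g '' U).Countable} with hW
  -- image of the complement of W is countable
  obtain ⟨b, b_count, -, hb⟩ := TopologicalSpace.exists_countable_basis Z
  have hWc : (g '' Wᶜ).Countable := by
    have hsub : g '' Wᶜ ⊆ ⋃ u ∈ {u ∈ b | (g '' u).Countable}, g '' u := by
      rintro y ⟨z, hz, rfl⟩
      simp only [hW, mem_compl_iff, mem_setOf_eq, not_forall] at hz
      obtain ⟨U, hU, hzU, hUc⟩ := hz
      rw [not_not] at hUc
      obtain ⟨u, hub, hzu, huU⟩ := hb.exists_subset_of_mem_open hzU hU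
      exact mem_biUnion ⟨hub, hUc.mono (image_mono  huU)⟩ ⟨z, hzu, rfl⟩
    exact Countable.mono hsub <| Countable.biUnion (b_count.mono (sep_subset _ _))
      fun u hu => hu.2
  have key : ∀ U : Set Z, IsOpen U → (U ∩ W).Nonempty → ¬(g '' (U ∩ W)).Countable := by
    rintro U hU ⟨z, hzU, hzW⟩ hcnt
    apply hzW U hU hzU
    have : g '' U ⊆ g '' (U ∩ W) ∪ g '' Wᶜ := by
      rintro y ⟨x, hx, rfl⟩
      by_cases hxW : x ∈ W
      · exact Or.inl ⟨x, ⟨hx, hxW⟩, rfl⟩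
      · exact Or.inr ⟨x, hxW, rfl⟩
    exact Countable.mono this (hcnt.union hWc)
  have hWne : ((univ : Set Z) ∩ W).Nonempty := by
    rcases eq_empty_or_nonempty W with h | h
    · exfalso
      apply hunc
      have hsub : range g ⊆ g '' Wᶜ := by
        rw [← image_univ]
        apply image_mono
        rw [h, compl_empty]
      exact hWc.mono hsub
    · obtain ⟨z, hz⟩ := h; exact ⟨z, mem_univ _, hz⟩
  -- splitting
  have split : ∀ U : Set Z, IsOpen U → (U ∩ W).Nonempty → ∀ ε : ENNReal, 0 < ε →
      ∃ U₀ U₁ : Set Z, (IsOpen U₀ ∧ (U₀ ∩ W).Nonempty ∧ U₀ ⊆ U ∧ EMetric.diam U₀ ≤ ε) ∧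
        (IsOpen U₁ ∧ (U₁ ∩ W).Nonempty ∧ U₁ ⊆ U ∧ EMetric.diam U₁ ≤ ε) ∧
        Disjoint (closure (g '' U₀)) (closure (g '' U₁)) := by
    intro U hU hne ε hε
    have h2 : (g '' (U ∩ W)).Nontrivial := by
      by_contra h
      exact key U hU hne (Set.not_nontrivial_iff.1 h).countable
    obtain ⟨y₀, hy₀, y₁, hy₁, hyne⟩ := h2
    obtain ⟨z₀, hz₀, rfl⟩ := hy₀
    obtain ⟨z₁, hz₁, rfl⟩ := hy₁
    set r : ℝ := dist (g z₀) (g z₁) with hr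
    have hrpos : 0 < r := dist_pos.2 hyne
    have hr4 : (0:ℝ) < r/4 := by linarith
    have hhalf : (0:ENNReal) < ε / 2 := ENNReal.div_pos hε.ne' (by norm_num)
    have main : ∀ z : Z, z ∈ U ∩ W →
        (IsOpen (U ∩ g ⁻¹' Metric.ball (g z) (r/4) ∩ EMetric.ball z (ε/2)) ∧
        ((U ∩ g ⁻¹' Metric.ball (g z) (r/4) ∩ EMetric.ball z (ε/2)) ∩ W).Nonempty ∧
        (U ∩ g ⁻¹' Metric.ball (g z) (r/4) ∩ EMetric.ball z (ε/2)) ⊆ U ∧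
        EMetric.diam (U ∩ g ⁻¹' Metric.ball (g z) (r/4) ∩ EMetric.ball z (ε/2)) ≤ ε) := by
      intro z hz
      refine ⟨(hU.inter (hg.isOpen_preimage _ Metric.isOpen_ball)).inter EMetric.isOpen_ball,
        ⟨z, ⟨⟨hz.1, Metric.mem_ball_self hr4⟩, EMetric.mem_ball_self hhalf⟩, hz.2⟩,
        fun x hx => hx.1.1, ?_⟩
      calc EMetric.diam _ ≤ EMetric.diam (EMetric.ball z (ε/2)) :=
            EMetric.diam_mono inter_subset_right
        _ ≤ 2 * (ε/2) := EMetric.diam_ball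
        _ = ε := by rw [mul_comm, ENNReal.div_mul_cancel] <;> norm_num
    refine ⟨U ∩ g ⁻¹' Metric.ball (g z₀) (r/4) ∩ EMetric.ball z₀ (ε/2),
            U ∩ g ⁻¹' Metric.ball (g z₁) (r/4) ∩ EMetric.ball z₁ (ε/2),
            main z₀ hz₀, main z₁ hz₁, ?_⟩
    have h₀ : closure (g '' (U ∩ g ⁻¹' Metric.ball (g z₀) (r/4) ∩ EMetric.ball z₀ (ε/2)))
        ⊆ Metric.closedBall (g z₀) (r/4) := by
      refine closure_minimal ?_ Metric.isClosed_closedBall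
      rintro y ⟨x, hx, rfl⟩
      exact Metric.ball_subset_closedBall hx.1.2
    have h₁ : closure (g '' (U ∩ g ⁻¹' Metric.ball (g z₁) (r/4) ∩ EMetric.ball z₁ (ε/2)))
        ⊆ Metric.closedBall (g z₁) (r/4) := by
      refine closure_minimal ?_ Metric.isClosed_closedBall
      rintro y ⟨x, hx, rfl⟩
      exact Metric.ball_subset_closedBall hx.1.2
    refine Disjoint.mono h₀ h₁ (Metric.closedBall_disjoint_closedBall ?_)
    rw [← hr]; linarith
  -- build the scheme
  obtain ⟨u, -, upos', hu⟩ := exists_seq_strictAnti_tendsto' (zero_lt_one' ENNReal)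
  have upos := fun n => (upos' n).1
  let P := Subtype fun E : Set Z => IsOpen E ∧ (E ∩ W).Nonempty
  choose U0 U1 h0 h1 hdisj using
    fun {E : Set Z} (hE : IsOpen E) (hne : (E ∩ W).Nonempty) {ε : ENNReal} (hε : 0 < ε) =>
    split E hE hne ε hε
  let DP : List Bool → P := fun l => by
    induction' l with a l ih
    · exact ⟨univ, isOpen_univ, hWne⟩
    cases a
    · exact ⟨U0 ih.property.1 ih.property.2 (upos (l.length + 1)),
        (h0 _ _ _).1, (h0 _ _ _).2.1⟩
    · exact ⟨U1 ih.property.1 ih.property.2 (upos (l.length + 1)),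
        (h1 _ _ _).1, (h1 _ _ _).2.1⟩
  let D : List Bool → Set Z := fun l => closure ((DP l).val ∩ W)
  have hDne : ∀ l, (D l).Nonempty := fun l => (DP l).property.2.mono subset_closure
  have hmono : ∀ l (a : Bool), (DP (a :: l)).val ⊆ (DP l).val := by
    intro l a
    cases a
    · exact (h0 _ _ _).2.2.1
    · exact (h1 _ _ _).2.2.1
  have hanti : ClosureAntitone D := by
    refine Antitone.closureAntitone ?_ fun l => isClosed_closure
    intro l a
    exact closure_mono (inter_subset_inter_left _ (hmono l a))
  have hdiam : VanishingDiam D := by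
    intro x
    apply tendsto_of_tendsto_of_tendsto_of_le_of_le' tendsto_const_nhds hu
    · simp
    rw [Filter.eventually_atTop]
    refine ⟨1, fun m hm => ?_⟩
    obtain ⟨n, rfl⟩ : ∃ n, m = n + 1 := ⟨m - 1, (Nat.succ_pred_eq_of_pos hm).symm⟩
    have : EMetric.diam (D (PiNat.res x (n+1)))
        ≤ EMetric.diam ((DP (PiNat.res x (n+1))).val) := by
      rw [show EMetric.diam ((DP (PiNat.res x (n+1))).val)
          = EMetric.diam (closure ((DP (PiNat.res x (n+1))).val)) from
          (EMetric.diam_closure _).symm]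
      exact EMetric.diam_mono (closure_mono inter_subset_left)
    refine this.trans ?_
    rw [PiNat.res_succ]
    cases h : x n
    · convert (h0 (DP (PiNat.res x n)).property.1 (DP (PiNat.res x n)).property.2
        (upos ((PiNat.res x n).length + 1))).2.2.2 using 2
      rfl
      rw [PiNat.res_length]
    · convert (h1 (DP (PiNat.res x n)).property.1 (DP (PiNat.res x n)).property.2
        (upos ((PiNat.res x n).length + 1))).2.2.2 using 2
      rfl
      rw [PiNat.res_length]
  have hgdisj : ∀ l : List Bool, ∀ a b : Bool, a ≠ b →
      Disjoint (g '' D (a :: l)) (g '' D (b :: l)) := by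
    have base : ∀ l : List Bool,
        Disjoint (g '' D (false :: l)) (g '' D (true :: l)) := by
      intro l
      have hd := hdisj (DP l).property.1 (DP l).property.2 (upos (l.length + 1))
      refine Disjoint.mono ?_ ?_ hd
      · exact (image_closure_subset_closure_image hg).trans
          (closure_mono (image_mono  inter_subset_left))
      · exact (image_closure_subset_closure_image hg).trans
          (closure_mono (image_mono  inter_subset_left))
    rintro l (_|_) (_|_) hab
    · exact absurd rfl hab
    · exact base l
    · exact (base l).symm
    · exact absurd rfl hab
  have hdom : ∀ {x : ℕ → Bool}, x ∈ (inducedMap D).1 := fun {x} => by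
    rw [hanti.map_of_vanishingDiam hdiam hDne]
    apply mem_univ
  refine ⟨fun x => g ((inducedMap D).2 ⟨x, hdom⟩), ?_, ?_⟩
  · intro x y hxy
    by_contra hne
    have hex : ∃ n, x n ≠ y n := by
      by_contra h
      push_neg at h
      exact hne (funext h)
    set n := Nat.find hex with hn
    have hres : PiNat.res x n = PiNat.res y n :=
      PiNat.res_eq_res.2 fun m hm => by
        by_contra h
        exact Nat.find_min hex hm h
    have hx' : g ((inducedMap D).2 ⟨x, hdom⟩) ∈ g '' D (x n :: PiNat.res x n) := by
      refine mem_image_of_mem g ?_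
      have := map_mem (A := D) ⟨x, hdom⟩ (n+1)
      rwa [PiNat.res_succ] at this
    have hy' : g ((inducedMap D).2 ⟨y, hdom⟩) ∈ g '' D (y n :: PiNat.res x n) := by
      refine mem_image_of_mem g ?_
      have := map_mem (A := D) ⟨y, hdom⟩ (n+1)
      rw [PiNat.res_succ] at this
      rwa [← hres] at this
    have hd := hgdisj (PiNat.res x n) (x n) (y n) (Nat.find_spec hex)
    replace hxy : g ((inducedMap D).2 ⟨x, hdom⟩) = g ((inducedMap D).2 ⟨y, hdom⟩) := hxy
    rw [hxy] at hx'
    exact (Set.disjoint_left.1 hd hx') hy'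
  · rintro y ⟨x, rfl⟩
    exact mem_range_self _


private lemma aux_continuum_le {Y : Type*} {S : Set Y} (h : (ℕ → Bool) → Y)
    (hinj : Function.Injective h) (hsub : Set.range h ⊆ S) :
    Cardinal.continuum ≤ Cardinal.mk S := by
  have hinj' : Function.Injective (fun x : ℕ → Bool => (⟨h x, hsub (Set.mem_range_self x)⟩ : S)) :=
    fun a b hab => hinj (congrArg Subtype.val hab)
  simpa using Cardinal.lift_mk_le_lift_mk_of_injective hinj'

theorem stmt_8 {X : Type} [TopologicalSpace X] [PolishSpace X] [Uncountable X]
    [MeasurableSpace X] [BorelSpace X]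
    {Y : Type} [TopologicalSpace Y] [PolishSpace Y] [MeasurableSpace Y] [BorelSpace Y]
    (𝓘 : Set (Set X))
    (hDown : ∀ A B : Set X, A ⊆ B → B ∈ 𝓘 → A ∈ 𝓘)
    (hUnion : ∀ f : ℕ → Set X, (∀ n, f n ∈ 𝓘) → (⋃ n, f n) ∈ 𝓘)
    (hProper : (univ : Set X) ∉ 𝓘)
    (hSing : ∀ x : X, ({x} : Set X) ∈ 𝓘)
    (hBase : ∀ A ∈ 𝓘, ∃ B : Set X, A ⊆ B ∧ MeasurableSet B ∧ B ∈ 𝓘)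
    (hccc : ∀ 𝒟 : Set (Set X), (∀ D ∈ 𝒟, MeasurableSet D ∧ D ∉ 𝓘) →
      𝒟.PairwiseDisjoint id → 𝒟.Countable)
    (I : Set X) (hI : I ∈ 𝓘)
    (f : ↥Iᶜ → Y) (hf : Measurable f)
    (hfib : ∀ y : Y, Subtype.val '' (f ⁻¹' {y}) ∈ 𝓘) :
    ∃ T : Set Y, ∀ B : Set X, MeasurableSet B → B ∉ 𝓘 →
      (Subtype.val '' (f ⁻¹' T) ∩ B).Nonempty ∧ (B \ Subtype.val '' (f ⁻¹' T)).Nonempty := by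
  classical
  -- countable unions indexed by a countable set of `Y` stay in the ideal
  have hBUnion : ∀ (s : Set Y), s.Countable → ∀ (F : Y → Set X), (∀ y ∈ s, F y ∈ 𝓘) →
      (⋃ y ∈ s, F y) ∈ 𝓘 := by
    intro s hs F hF
    rcases s.eq_empty_or_nonempty with rfl | hne
    · simp only [mem_empty_iff_false, iUnion_of_empty, iUnion_empty]
      obtain ⟨x⟩ : Nonempty X := inferInstance
      exact hDown _ _ (empty_subset _) (hSing x)
    · obtain ⟨e, rfl⟩ := hs.exists_eq_range hne
      rw [biUnion_range]
      exact hUnion _ fun n => hF _ ⟨n, rfl⟩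
  obtain ⟨J, hIJ, hJm, hJI⟩ := hBase I hI
  -- the image family
  set S : Set X → Set Y := fun B => f '' {x : ↥Iᶜ | (x : X) ∈ B \ J} with hSdef
  have key : ∀ B : Set X, MeasurableSet B → B ∉ 𝓘 → Cardinal.continuum ≤ Cardinal.mk (S B) := by
    intro B hBm hBI
    set C : Set X := B \ J with hC
    have hCm : MeasurableSet C := hBm.diff hJm
    have hCI : C ∉ 𝓘 := by
      intro hmem
      apply hBI
      refine hDown B (⋃ n : ℕ, if n = 0 then C else J) ?_ (hUnion _ ?_)
      · intro x hx
        by_cases hxJ : x ∈ J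
        · exact mem_iUnion.2 ⟨1, by simp only [if_neg one_ne_zero]; exact hxJ⟩
        · exact mem_iUnion.2 ⟨0, by simp only [if_pos rfl]; exact ⟨hx, hxJ⟩⟩
      · intro n; by_cases h : n = 0 <;> simp [h, hmem, hJI]
    have hCsub : ∀ z : X, z ∈ C → z ∉ I := fun z hz hzI => hz.2 (hIJ hzI)
    let incl : ↥C → ↥Iᶜ := fun z => ⟨(z : X), hCsub _ z.2⟩
    let g : ↥C → Y := f ∘ incl
    have hgm : Measurable g := hf.comp (Measurable.subtype_mk measurable_subtype_coe)
    have hrange : Set.range g = S B := by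
      ext y
      constructor
      · rintro ⟨z, rfl⟩
        exact ⟨incl z, z.2, rfl⟩
      · rintro ⟨x, hx, rfl⟩
        exact ⟨⟨(x : X), hx⟩, congrArg f (Subtype.ext rfl)⟩
    have huncount : ¬(Set.range g).Countable := by
      intro hcnt
      apply hCI
      have hsub : C ⊆ ⋃ y ∈ Set.range g, Subtype.val '' (f ⁻¹' {y}) := by
        intro c hc
        refine mem_biUnion (mem_range_self (⟨c, hc⟩ : ↥C)) ?_
        exact ⟨incl ⟨c, hc⟩, rfl, rfl⟩
      exact hDown _ _ hsub (hBUnion _ hcnt _ fun y _ => hfib y)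
    haveI : StandardBorelSpace ↥C := hCm.standardBorel
    let up := upgradeStandardBorel ↥C
    obtain ⟨τ', hle, hcont, hpol⟩ :=
      @Measurable.exists_continuous ↥C Y up.toTopologicalSpace up.toPolishSpace
        up.toMeasurableSpace up.toBorelSpace _ _ _ g _ hgm
    obtain ⟨h, hinj, hsub⟩ := @aux_cantor_inj_range ↥C Y τ' hpol _ _ g hcont huncount
    rw [hrange] at hsub
    exact aux_continuum_le h hinj hsub
  -- cardinality of the family of positive measurable sets
  set ℬ : Set (Set X) := {B : Set X | MeasurableSet B ∧ B ∉ 𝓘} with hℬ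
  have hcard : Cardinal.mk ℬ ≤ Cardinal.continuum := by
    obtain ⟨b, bc, -, hb⟩ := TopologicalSpace.exists_countable_basis X
    have hgen : (inferInstance : MeasurableSpace X) = MeasurableSpace.generateFrom b := by
      rw [BorelSpace.measurable_eq (α := X), hb.borel_eq_generateFrom]
    have hbc : Cardinal.mk b ≤ Cardinal.continuum := by
      haveI := bc.to_subtype
      exact (Cardinal.mk_le_aleph0_iff.mpr inferInstance).trans Cardinal.aleph0_le_continuum
    have hmeas := MeasurableSpace.cardinal_measurableSet_le_continuum (α := X) hbc
    refine le_trans ?_ hmeas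
    apply Cardinal.mk_le_mk_of_subset
    intro t ht
    show @MeasurableSet X (MeasurableSpace.generateFrom b) t
    rw [← hgen]
    exact ht.1
  -- set up the transfinite recursion
  set ι : Type := (Cardinal.continuum).ord.ToType with hι
  haveI hneB : Nonempty ↥ℬ := ⟨⟨univ, MeasurableSet.univ, hProper⟩⟩
  have hmkι : Cardinal.mk ι = Cardinal.continuum := Cardinal.mk_ord_toType _
  have hleι : Cardinal.mk ↥ℬ ≤ Cardinal.mk ι := by rw [hmkι]; exact hcard
  obtain ⟨emb⟩ := (Cardinal.le_def _ _).1 hleι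
  set φ : ι → ↥ℬ := Function.invFun emb with hφdef
  have hφ : Function.Surjective φ := Function.invFun_surjective emb.injective
  have h1c : (1 : Cardinal) < Cardinal.continuum :=
    Cardinal.one_lt_aleph0.trans_le Cardinal.aleph0_le_continuum
  have hpick : ∀ (i : ι) (A : Set Y), Cardinal.mk A < Cardinal.continuum →
      ∃ p : Y × Y, p.1 ∈ S (φ i).1 ∧ p.2 ∈ S (φ i).1 ∧ p.1 ≠ p.2 ∧ p.1 ∉ A ∧ p.2 ∉ A := by
    intro i A hA
    have hSge := key (φ i).1 (φ i).2.1 (φ i).2.2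
    have hdiff : Cardinal.continuum ≤ Cardinal.mk ((S (φ i).1) \ A : Set Y) := by
      by_contra hlt
      rw [not_le] at hlt
      have h1 : Cardinal.mk ((S (φ i).1) ∩ A : Set Y) < Cardinal.continuum :=
        lt_of_le_of_lt (Cardinal.mk_le_mk_of_subset inter_subset_right) hA
      have h2 := Cardinal.mk_diff_add_mk
        (inter_subset_left : (S (φ i).1) ∩ A ⊆ S (φ i).1)
      rw [diff_self_inter] at h2
      have h3 : Cardinal.mk (S (φ i).1) < Cardinal.continuum := by
        rw [← h2]
        exact Cardinal.add_lt_of_lt Cardinal.aleph0_le_continuum hlt h1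
      exact absurd hSge (not_le.2 h3)
    have hnt : ((S (φ i).1) \ A : Set Y).Nontrivial := by
      rw [← Set.nontrivial_coe_sort]
      exact Cardinal.one_lt_iff_nontrivial.1 (h1c.trans_le hdiff)
    obtain ⟨a, ha, b, hb, hab⟩ := hnt
    exact ⟨(a, b), ha.1, hb.1, hab, ha.2, hb.2⟩
  have wf : WellFounded ((· < ·) : ι → ι → Prop) := IsWellFounded.wf
  set Av : (i : ι) → ((j : ι) → j < i → Y × Y) → Set Y :=
    fun i rec => {w | ∃ j, ∃ hj : j < i, (rec j hj).1 = w ∨ (rec j hj).2 = w} with hAvdef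
  have hAv : ∀ i rec, Cardinal.mk (Av i rec) < Cardinal.continuum := by
    intro i rec
    have hsub : Av i rec ⊆ Set.range (fun p : ↥(Iio i) × Bool =>
        if p.2 then (rec p.1.1 p.1.2).1 else (rec p.1.1 p.1.2).2) := by
      rintro w ⟨j, hj, (h | h)⟩
      · exact ⟨(⟨j, hj⟩, true), h⟩
      · exact ⟨(⟨j, hj⟩, false), h⟩
    refine lt_of_le_of_lt ((Cardinal.mk_le_mk_of_subset hsub).trans Cardinal.mk_range_le) ?_
    have h1 : Cardinal.mk ↥(Iio i) < Cardinal.continuum := Cardinal.mk_Iio_ord_toType i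
    have h2 : Cardinal.mk Bool < Cardinal.continuum :=
      (Cardinal.lt_aleph0_of_finite Bool).trans_le Cardinal.aleph0_le_continuum
    rw [Cardinal.mk_prod]
    simpa using Cardinal.mul_lt_of_lt Cardinal.aleph0_le_continuum h1 h2
  set Fdef : (i : ι) → ((j : ι) → j < i → Y × Y) → Y × Y :=
    fun i rec => Classical.choose (hpick i (Av i rec) (hAv i rec)) with hFdef
  set F : ι → Y × Y := wf.fix Fdef with hF
  have hFeq : ∀ i, F i = Fdef i (fun j _ => F j) := fun i => wf.fix_eq Fdef i
  have hFspec : ∀ i, (F i).1 ∈ S (φ i).1 ∧ (F i).2 ∈ S (φ i).1 ∧ (F i).1 ≠ (F i).2 ∧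
      (F i).1 ∉ Av i (fun j _ => F j) ∧ (F i).2 ∉ Av i (fun j _ => F j) := by
    intro i
    have hcs := Classical.choose_spec (hpick i (Av i (fun j _ => F j)) (hAv i (fun j _ => F j)))
    rw [hFeq i]
    exact hcs
  refine ⟨Set.range (fun i => (F i).1), ?_⟩
  intro B hBm hBI
  obtain ⟨i, hi⟩ := hφ ⟨B, ⟨hBm, hBI⟩⟩
  have hspec := hFspec i
  rw [hi] at hspec
  obtain ⟨hy1, hy2, hyne, hav1, hav2⟩ := hspec
  constructor
  · obtain ⟨x, hx, hfx⟩ := hy1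
    refine ⟨(x : X), ⟨x, ?_, rfl⟩, hx.1⟩
    show f x ∈ Set.range (fun i => (F i).1)
    exact ⟨i, hfx.symm⟩
  · obtain ⟨x, hx, hfx⟩ := hy2
    refine ⟨(x : X), hx.1, ?_⟩
    rintro ⟨x', hx', hxx⟩
    have hx'x : x' = x := Subtype.val_injective hxx
    subst hx'x
    obtain ⟨k, hk⟩ := hx'
    simp only at hk
    rw [hfx] at hk
    rcases lt_trichotomy k i with h | h | h
    · exact hav2 ⟨k, h, Or.inl hk⟩
    · subst h
      exact hyne hk
    · exact (hFspec k).2.2.2.1 ⟨i, h, Or.inr hk.symm⟩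
end
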